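/- arXiv:1601.01508 — 9 statements merged into one kernel-verified Lean document; each statement's English description precedes it below -/
import Mathlib

section
/- Let k be a field of characteristic zero, let f_1,…,f_m ∈ k[x_1,…,x_n] be polynomials with 1 ≤ m ≤ n, and let g ∈ k[x_1,…,x_n] be an irreducible polynomial. If there exists an irreducible polynomial w ∈ k[x_1,…,x_m] such that g² divides w(f_1,…,f_m), then g divides dgcd(f_1,…,f_m). -/
open MvPolynomial

/-- The Jacobian determinant of `f₁, …, f_m` with respect to the variables
`x_{i 1}, …, x_{i m}`. -/
noncomputable def jacDet {k : Type*} [Field k] {m n : ℕ}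
    (f : Fin m → MvPolynomial (Fin n) k) (i : Fin m → Fin n) : MvPolynomial (Fin n) k :=
  Matrix.det (Matrix.of fun j l => pderiv (i l) (f j))

/-- `d` is a greatest common divisor (in the UFD `k[x₁,…,xₙ]`) of all Jacobian
determinants `jac^{f₁,…,f_m}_{x_{i₁},…,x_{i_m}}`, `1 ≤ i₁ < … < i_m ≤ n`;
strictly increasing sequences `i₁ < … < i_m` are encoded as strictly monotone
maps `Fin m → Fin n`.  (Note that this forces `d = 0` when all the Jacobian
determinants vanish.) -/
def IsDgcd {k : Type*} [Field k] {m n : ℕ}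
    (f : Fin m → MvPolynomial (Fin n) k) (d : MvPolynomial (Fin n) k) : Prop :=
  (∀ i : Fin m → Fin n, StrictMono i → d ∣ jacDet f i) ∧
  ∀ e : MvPolynomial (Fin n) k, (∀ i : Fin m → Fin n, StrictMono i → e ∣ jacDet f i) → e ∣ d

private lemma coeff_pderiv'' {σ : Type*} {R : Type*} [CommSemiring R] (s : σ)
    (q : MvPolynomial σ R) (m : σ →₀ ℕ) :
    coeff m (pderiv s q) = (m s + 1 : ℕ) * coeff (m + Finsupp.single s 1) q := by
  classical
  induction q using MvPolynomial.induction_on' with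
  | monomial u a =>
    rw [pderiv_monomial, coeff_monomial, coeff_monomial]
    by_cases h : u = m + Finsupp.single s 1
    · subst h
      rw [if_pos, if_pos rfl]
      · rw [Finsupp.add_apply, Finsupp.single_eq_same]
        push_cast
        ring
      · ext x
        by_cases hx : x = s
        · subst hx
          simp [Finsupp.tsub_apply, Finsupp.add_apply, Finsupp.single_eq_same]
        · simp [Finsupp.tsub_apply, Finsupp.add_apply, Finsupp.single_apply, Ne.symm hx, hx]
    · rw [if_neg h, mul_zero]
      by_cases h2 : u - Finsupp.single s 1 = m
      · by_cases h3 : u s = 0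
        · simp [h3]
        · exfalso
          apply h
          ext x
          by_cases hx : x = s
          · subst hx
            have h4 := DFunLike.congr_fun h2 x
            rw [Finsupp.tsub_apply, Finsupp.single_eq_same] at h4
            rw [Finsupp.add_apply, Finsupp.single_eq_same, ← h4]
            omega
          · have h4 := DFunLike.congr_fun h2 x
            rw [Finsupp.tsub_apply, Finsupp.single_apply, if_neg (Ne.symm hx)] at h4
            rw [Finsupp.add_apply, Finsupp.single_apply, if_neg (Ne.symm hx), ← h4]
            omega
      · rw [if_neg h2]
  | add p q hp hq =>
    rw [map_add, coeff_add, coeff_add, hp, hq, mul_add]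

private lemma fs_sub_add {σ : Type*} {m : σ →₀ ℕ} {s : σ} (h : m s ≠ 0) :
    (m - Finsupp.single s 1) + Finsupp.single s 1 = m := by
  classical
  ext x
  rw [Finsupp.add_apply, Finsupp.tsub_apply]
  by_cases hx : x = s
  · subst hx; rw [Finsupp.single_eq_same]; omega
  · rw [Finsupp.single_apply, if_neg (Ne.symm hx)]; omega

private lemma sum_add_single {σ : Type*} (m : σ →₀ ℕ) (s : σ) :
    ((m + Finsupp.single s 1).sum fun _ e => e) = (m.sum fun _ e => e) + 1 := by
  classical
  rw [Finsupp.sum_add_index' (fun _ => rfl) (fun _ _ _ => rfl),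
    Finsupp.sum_single_index rfl]

private lemma totalDegree_pderiv_lt' {σ : Type*} {k : Type*} [Field k] [CharZero k]
    {q : MvPolynomial σ k} {s : σ} (h : pderiv s q ≠ 0) :
    (pderiv s q).totalDegree < q.totalDegree := by
  classical
  have key : ∀ m ∈ (pderiv s q).support, (m.sum fun _ e => e) + 1 ≤ q.totalDegree := by
    intro m hm
    rw [mem_support_iff, coeff_pderiv''] at hm
    have h2 : coeff (m + Finsupp.single s 1) q ≠ 0 := by
      intro h3; rw [h3, mul_zero] at hm; exact hm rfl
    have h4 := le_totalDegree (p := q) (mem_support_iff.mpr h2)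
    rwa [sum_add_single] at h4
  obtain ⟨m₀, hm₀⟩ := support_nonempty.mpr h
  have hpos : 0 < q.totalDegree := lt_of_lt_of_le (Nat.succ_pos _) (key m₀ hm₀)
  rw [totalDegree]
  exact (Finset.sup_lt_iff hpos).mpr fun m hm => Nat.lt_of_succ_le (key m hm)

private lemma exists_C_of_pderiv_eq_zero' {σ : Type*} {k : Type*} [Field k] [CharZero k]
    {q : MvPolynomial σ k} (h : ∀ s, pderiv s q = 0) : ∃ a : k, q = C a := by
  classical
  refine ⟨coeff 0 q, ?_⟩
  ext m
  rw [coeff_C]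
  by_cases hm : (0 : σ →₀ ℕ) = m
  · rw [if_pos hm, ← hm]
  · rw [if_neg hm]
    by_contra hc
    obtain ⟨s, hs⟩ : ∃ s, m s ≠ 0 := by
      by_contra hall
      push_neg at hall
      exact hm (Finsupp.ext fun x => (hall x).symm)
    set m' : σ →₀ ℕ := m - Finsupp.single s 1 with hm'
    have h5 : coeff m' (pderiv s q) = (m' s + 1 : ℕ) * coeff m q := by
      rw [coeff_pderiv'', hm', fs_sub_add hs]
    rw [h s, coeff_zero] at h5
    have h6 : ((m' s + 1 : ℕ) : k) ≠ 0 := Nat.cast_ne_zero.mpr (Nat.succ_ne_zero _)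
    exact hc (by
      rcases mul_eq_zero.mp h5.symm with h7 | h7
      · exact absurd h7 h6
      · exact h7)

private lemma pderiv_pderiv_comm' {σ : Type*} {k : Type*} [Field k]
    (s t : σ) (q : MvPolynomial σ k) :
    pderiv s (pderiv t q) = pderiv t (pderiv s q) := by
  classical
  ext m
  rw [coeff_pderiv'', coeff_pderiv'', coeff_pderiv'', coeff_pderiv'']
  by_cases h : s = t
  · subst h; ring
  · rw [Finsupp.add_apply, Finsupp.add_apply, Finsupp.single_apply, Finsupp.single_apply,
      if_neg h, if_neg (Ne.symm h), add_zero, add_zero, add_assoc, add_assoc,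
      add_comm (Finsupp.single s 1) (Finsupp.single t 1)]
    ring

private lemma pderiv_aeval' {k : Type*} [Field k] {m n : ℕ}
    (f : Fin m → MvPolynomial (Fin n) k) (q : MvPolynomial (Fin m) k) (j : Fin n) :
    pderiv j (aeval f q) = ∑ t, aeval f (pderiv t q) * pderiv j (f t) := by
  classical
  induction q using MvPolynomial.induction_on with
  | C a => simp
  | add p q hp hq =>
    simp only [_root_.map_add, add_mul, Finset.sum_add_distrib, hp, hq]
  | mul_X q s hq =>
    have step : ∀ t, aeval f (pderiv t (q * X s)) * pderiv j (f t)
        = aeval f (pderiv t q) * pderiv j (f t) * f s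
          + (if t = s then aeval f q * pderiv j (f t) else 0) := by
      intro t
      rw [pderiv_mul, _root_.map_add, _root_.map_mul, _root_.map_mul, aeval_X, add_mul]
      congr 1
      · ring
      · by_cases h : t = s
        · subst h; rw [pderiv_X_self, if_pos rfl, _root_.map_one, mul_one]
        · rw [pderiv_X_of_ne (fun hh => h hh.symm), if_neg h, _root_.map_zero, mul_zero, zero_mul]
    rw [_root_.map_mul, aeval_X, pderiv_mul, hq, Finset.sum_congr rfl (fun t _ => step t),
      Finset.sum_add_distrib, Finset.sum_ite_eq' Finset.univ s
        (fun t => aeval f q * pderiv j (f t)), if_pos (Finset.mem_univ s), Finset.sum_mul]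

open Matrix in
private lemma dvd_det' {R : Type*} [CommRing R] {m : ℕ} {g : R} (hg : Prime g)
    (M : Matrix (Fin m) (Fin m) R) (v : Fin m → R) (t : Fin m) (hv : ¬ g ∣ v t)
    (hcol : ∀ l, g ∣ ∑ j, v j * M j l) : g ∣ M.det := by
  classical
  choose b hb using hcol
  have h1 : v ᵥ* M = fun l => g * b l := by
    funext l
    rw [← hb l]
    simp [Matrix.vecMul, dotProduct]
  have h2 := congrFun (congrArg (fun u => u ᵥ* M.adjugate) h1) t
  rw [Matrix.vecMul_vecMul, Matrix.mul_adjugate] at h2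
  have hL : (v ᵥ* (M.det • (1 : Matrix (Fin m) (Fin m) R))) t = M.det * v t := by
    simp [Matrix.vecMul, dotProduct, Matrix.smul_apply, Matrix.one_apply, mul_ite,
      Finset.sum_ite_eq, mul_comm]
  have hR : ((fun l => g * b l) ᵥ* M.adjugate) t = g * ∑ l, b l * M.adjugate l t := by
    simp [Matrix.vecMul, dotProduct, Finset.mul_sum, mul_assoc]
  rw [hL, hR] at h2
  exact ((hg.dvd_mul).mp ⟨_, h2⟩).resolve_right hv

private lemma pderiv_rename_zero' {k : Type*} [Field k] {σ τ : Type*}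
    (h : σ → τ) (t : τ) (hh : ∀ s, h s ≠ t) (q : MvPolynomial σ k) :
    pderiv t (rename h q) = 0 := by
  classical
  induction q using MvPolynomial.induction_on with
  | C a => simp
  | add p q hp hq => rw [_root_.map_add, _root_.map_add, hp, hq, add_zero]
  | mul_X p s hp =>
    rw [_root_.map_mul, rename_X, pderiv_mul, hp, pderiv_X_of_ne (hh s), mul_zero, zero_mul, add_zero]

private lemma finSuccEquiv_rename_succ' {k : Type*} [Field k] {m : ℕ}
    (q : MvPolynomial (Fin m) k) :
    finSuccEquiv k m (rename Fin.succ q) = Polynomial.C q := by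
  induction q using MvPolynomial.induction_on with
  | C a =>
    rw [rename_C]
    simp [finSuccEquiv_apply]
  | add p q hp hq => rw [_root_.map_add, _root_.map_add, hp, hq, _root_.map_add]
  | mul_X p s hp => rw [_root_.map_mul, _root_.map_mul, rename_X, hp, finSuccEquiv_X_succ, _root_.map_mul]

private lemma elim_lemma' {k : Type*} [Field k] {m : ℕ}
    (w p : MvPolynomial (Fin (m + 1)) k) (t₀ : Fin (m + 1))
    (hw : Irreducible w) (hwt : pderiv t₀ w ≠ 0) (hp0 : p ≠ 0) (hwp : ¬ w ∣ p) :
    ∃ A B r : MvPolynomial (Fin (m + 1)) k,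
      A * p + B * w = r ∧ r ≠ 0 ∧ pderiv t₀ r = 0 := by
  classical
  set σe : Fin (m + 1) ≃ Fin (m + 1) := Equiv.swap t₀ 0 with hσe
  set R₀ := MvPolynomial (Fin m) k with hR₀
  set E : MvPolynomial (Fin (m + 1)) k ≃ₐ[k] Polynomial R₀ :=
    (renameEquiv k σe).trans (finSuccEquiv k m) with hE
  have hEapp : ∀ q : MvPolynomial (Fin (m + 1)) k,
      E q = finSuccEquiv k m (rename σe q) := fun q => rfl
  have hE_irr : Irreducible (E w) := (MulEquiv.irreducible_iff E.toMulEquiv).mpr hw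
  have hEw0 : E w ≠ 0 := hE_irr.ne_zero
  have hEp0 : E p ≠ 0 := by
    intro h0
    have h1 := congrArg E.symm h0
    rw [AlgEquiv.symm_apply_apply, _root_.map_zero] at h1
    exact hp0 h1
  have hEdvd : ¬ E w ∣ E p := by
    rintro ⟨c, hc⟩
    refine hwp ⟨E.symm c, ?_⟩
    have h1 := congrArg E.symm hc
    rwa [AlgEquiv.symm_apply_apply, _root_.map_mul, AlgEquiv.symm_apply_apply] at h1
  -- natDegree of E w is positive
  have hpd0 : pderiv (0 : Fin (m + 1)) (rename σe w) ≠ 0 := by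
    have h1 : pderiv (σe t₀) (rename σe w) = rename σe (pderiv t₀ w) :=
      pderiv_rename σe.injective t₀ w
    rw [hσe, Equiv.swap_apply_left] at h1
    rw [h1]
    intro h2
    exact hwt ((map_eq_zero_iff _ (rename_injective σe σe.injective)).mp h2)
  have hdeg : (E w).natDegree ≠ 0 := by
    rw [hEapp, natDegree_finSuccEquiv]
    intro hd0
    apply hpd0
    apply pderiv_eq_zero_of_notMem_vars
    intro hmem
    obtain ⟨d, hd, h0d⟩ := (mem_vars _).1 hmem
    have h3 := monomial_le_degreeOf 0 hd
    rw [hd0] at h3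
    exact (Finsupp.mem_support_iff.mp h0d) (Nat.le_zero.mp h3)
  -- instances
  letI : NormalizationMonoid R₀ := UniqueFactorizationMonoid.normalizationMonoid.toNormalizationMonoid
  letI : NormalizedGCDMonoid R₀ := UniqueFactorizationMonoid.toNormalizedGCDMonoid R₀
  set F := FractionRing R₀ with hF
  have hinj : Function.Injective (algebraMap R₀ F) := IsFractionRing.injective R₀ F
  have hφinj : Function.Injective
      (fun q : Polynomial R₀ => q.map (algebraMap R₀ F)) :=
    Polynomial.map_injective _ hinj
  -- primitivity of E w
  have hprim : (E w).IsPrimitive := by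
    intro r hr
    obtain ⟨u, hu⟩ := hr
    rcases hE_irr.isUnit_or_isUnit hu with h | h
    · exact Polynomial.isUnit_C.mp h
    · exfalso
      apply hdeg
      have hr0 : Polynomial.C r ≠ 0 := fun hc => hEw0 (by rw [hu, hc, zero_mul])
      rw [hu, Polynomial.natDegree_mul hr0 h.ne_zero, Polynomial.natDegree_C,
        Polynomial.natDegree_eq_zero_of_isUnit h]
  have hirr3 : Irreducible ((E w).map (algebraMap R₀ F)) :=
    (Polynomial.IsPrimitive.irreducible_iff_irreducible_map_fraction_map hprim).mp hE_irr
  -- smul helper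
  have hsmul : ∀ (d : R₀) (c : Polynomial F),
      d • c = Polynomial.C (algebraMap R₀ F d) * c := by
    intro d c
    rw [← Polynomial.smul_eq_C_mul, algebraMap_smul]
  -- non-divisibility over F
  have hndvd3 : ¬ (E w).map (algebraMap R₀ F) ∣ (E p).map (algebraMap R₀ F) := by
    rintro ⟨c, hc⟩
    obtain ⟨dc, hdc⟩ := IsLocalization.integerNormalization_map_to_map (nonZeroDivisors R₀) c
    have key : E w ∣ Polynomial.C (dc : R₀) * E p := by
      refine ⟨IsLocalization.integerNormalization (nonZeroDivisors R₀) c, ?_⟩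
      apply hφinj
      simp only [Polynomial.map_mul, Polynomial.map_C]
      rw [hdc, hsmul, hc]
      ring
    have hEwprime : Prime (E w) := UniqueFactorizationMonoid.irreducible_iff_prime.mp hE_irr
    rcases hEwprime.dvd_mul.mp key with hA | hB
    · have hdc0 : Polynomial.C (dc : R₀) ≠ 0 := by
        rw [Ne, Polynomial.C_eq_zero]
        exact nonZeroDivisors.coe_ne_zero dc
      have h4 := Polynomial.natDegree_le_of_dvd hA hdc0
      rw [Polynomial.natDegree_C] at h4
      exact hdeg (Nat.le_zero.mp h4)
    · exact hEdvd hB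
  -- Bezout over F
  have hcop : IsCoprime ((E w).map (algebraMap R₀ F)) ((E p).map (algebraMap R₀ F)) :=
    (hirr3.coprime_iff_not_dvd).mpr hndvd3
  obtain ⟨a, b, hab⟩ := hcop
  obtain ⟨da, hda⟩ := IsLocalization.integerNormalization_map_to_map (nonZeroDivisors R₀) a
  obtain ⟨db, hdb⟩ := IsLocalization.integerNormalization_map_to_map (nonZeroDivisors R₀) b
  set na := IsLocalization.integerNormalization (nonZeroDivisors R₀) a with hna
  set nb := IsLocalization.integerNormalization (nonZeroDivisors R₀) b with hnb
  have hkey : (Polynomial.C (da : R₀) * nb) * E p + (Polynomial.C (db : R₀) * na) * E w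
      = Polynomial.C ((da : R₀) * (db : R₀)) := by
    apply hφinj
    simp only [Polynomial.map_add, Polynomial.map_mul, Polynomial.map_C, _root_.map_mul]
    rw [hda, hdb, hsmul, hsmul]
    linear_combination
      (Polynomial.C (algebraMap R₀ F (da : R₀)) * Polynomial.C (algebraMap R₀ F (db : R₀))) * hab
  refine ⟨E.symm (Polynomial.C (da : R₀) * nb), E.symm (Polynomial.C (db : R₀) * na),
    E.symm (Polynomial.C ((da : R₀) * (db : R₀))), ?_, ?_, ?_⟩
  · have h1 := congrArg E.symm hkey
    rwa [_root_.map_add,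
      _root_.map_mul E.symm (Polynomial.C (da : R₀) * nb) (E p),
      _root_.map_mul E.symm (Polynomial.C (db : R₀) * na) (E w),
      AlgEquiv.symm_apply_apply, AlgEquiv.symm_apply_apply] at h1
  · intro h0
    have h1 := congrArg E h0
    rw [AlgEquiv.apply_symm_apply, _root_.map_zero] at h1
    rw [Polynomial.C_eq_zero] at h1
    exact mul_ne_zero (nonZeroDivisors.coe_ne_zero da) (nonZeroDivisors.coe_ne_zero db) h1
  · have h1 : E (rename (fun s => σe.symm (Fin.succ s)) ((da : R₀) * (db : R₀)))
        = Polynomial.C ((da : R₀) * (db : R₀)) := by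
      rw [hEapp, rename_rename]
      have h2 : (⇑σe ∘ fun s => σe.symm (Fin.succ s)) = Fin.succ := by
        funext s; simp
      rw [h2, finSuccEquiv_rename_succ']
    have h2 := congrArg E.symm h1
    rw [AlgEquiv.symm_apply_apply] at h2
    rw [← h2]
    apply pderiv_rename_zero'
    intro s hs
    have h3 : Fin.succ s = σe t₀ := by
      rw [← hs]
      exact (σe.apply_symm_apply _).symm
    rw [hσe, Equiv.swap_apply_left] at h3
    exact Fin.succ_ne_zero s h3

private lemma exists_minimal' {α : Type*} (P : α → Prop) (f : α → ℕ) (h : ∃ a, P a) :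
    ∃ a, P a ∧ ∀ b, P b → f a ≤ f b := by
  obtain ⟨a, ha⟩ := h
  have hne : {d : ℕ | ∃ b, P b ∧ f b = d}.Nonempty := ⟨f a, a, ha, rfl⟩
  obtain ⟨b, hb, hfb⟩ := Nat.sInf_mem hne
  exact ⟨b, hb, fun c hc => hfb ▸ Nat.sInf_le ⟨c, hc, rfl⟩⟩

/-- If `g² ∣ w(f₁,…,f_m)` for some irreducible `w ∈ k[x₁,…,x_m]`, then
`g ∣ dgcd(f₁,…,f_m)`. -/
theorem statement3 {k : Type*} [Field k] [CharZero k] {m n : ℕ}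
    (hm : 1 ≤ m) (hmn : m ≤ n)
    (f : Fin m → MvPolynomial (Fin n) k)
    (g : MvPolynomial (Fin n) k) (hg : Irreducible g)
    (h : ∃ w : MvPolynomial (Fin m) k, Irreducible w ∧ g ^ 2 ∣ aeval f w)
    (d : MvPolynomial (Fin n) k) (hd : IsDgcd f d) :
    g ∣ d := by
  classical
  obtain ⟨m', rfl⟩ : ∃ m', m = m' + 1 := ⟨m - 1, (Nat.succ_pred_eq_of_pos hm).symm⟩
  obtain ⟨w, hw_irr, hw2⟩ := h
  have hgp : Prime g := UniqueFactorizationMonoid.irreducible_iff_prime.mp hg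
  -- the key vector
  have key : ∃ v : Fin (m' + 1) → MvPolynomial (Fin n) k,
      (∃ t, ¬ g ∣ v t) ∧ ∀ j : Fin n, g ∣ ∑ t, v t * pderiv j (f t) := by
    -- helper to build the vector from a polynomial q with g² ∣ q(f)
    have mkv : ∀ q : MvPolynomial (Fin (m' + 1)) k, g ^ 2 ∣ aeval f q →
        (∃ t, ¬ g ∣ aeval f (pderiv t q)) →
        ∃ v : Fin (m' + 1) → MvPolynomial (Fin n) k,
          (∃ t, ¬ g ∣ v t) ∧ ∀ j : Fin n, g ∣ ∑ t, v t * pderiv j (f t) := by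
      rintro q hq ⟨t, ht⟩
      refine ⟨fun t => aeval f (pderiv t q), ⟨t, ht⟩, fun j => ?_⟩
      rw [← pderiv_aeval']
      obtain ⟨c, hc⟩ := hq
      rw [hc]
      have hstep : pderiv j (g ^ 2 * c)
          = g * (((2 : ℕ) : MvPolynomial (Fin n) k) * pderiv j g * c + g * pderiv j c) := by
        rw [pderiv_mul, pderiv_pow, show (2 : ℕ) - 1 = 1 from rfl, pow_one]
        ring
      exact ⟨_, hstep⟩
    -- no nonzero constants are divisible multiples
    have no_const : ∀ q : MvPolynomial (Fin (m' + 1)) k, q ≠ 0 → g ∣ aeval f q →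
        ∃ t, pderiv t q ≠ 0 := by
      intro q hq0 hqd
      by_contra hcon
      push_neg at hcon
      obtain ⟨a, rfl⟩ := exists_C_of_pderiv_eq_zero' hcon
      have ha : a ≠ 0 := fun h0 => hq0 (by rw [h0, _root_.map_zero])
      rw [aeval_C] at hqd
      exact hg.not_isUnit
        (isUnit_of_dvd_unit hqd ((algebraMap k (MvPolynomial (Fin n) k)).isUnit_map ha.isUnit))
    have hgw : g ∣ aeval f w := (dvd_pow_self g two_ne_zero).trans hw2
    -- case A : some partial of w survives
    by_cases hw1 : ∃ t, ¬ g ∣ aeval f (pderiv t w)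
    · exact mkv w hw2 hw1
    push_neg at hw1
    -- minimal element p of S
    obtain ⟨p, ⟨hp0, hpdvd⟩, hpmin⟩ :=
      exists_minimal' (fun q : MvPolynomial (Fin (m' + 1)) k => q ≠ 0 ∧ g ∣ aeval f q)
        totalDegree ⟨w, hw_irr.ne_zero, hgw⟩
    have hminS : ∀ q : MvPolynomial (Fin (m' + 1)) k, q ≠ 0 →
        totalDegree q < totalDegree p → ¬ g ∣ aeval f q := by
      intro q hq0 hlt hdvd
      exact absurd (hpmin q ⟨hq0, hdvd⟩) (Nat.not_le.mpr hlt)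
    obtain ⟨t₀, ht₀⟩ := no_const p hp0 hpdvd
    have hpt₀ : ¬ g ∣ aeval f (pderiv t₀ p) :=
      hminS _ ht₀ (totalDegree_pderiv_lt' ht₀)
    -- case : g² divides p(f)
    by_cases hp2 : g ^ 2 ∣ aeval f p
    · exact mkv p hp2 ⟨t₀, hpt₀⟩
    -- w does not divide p
    have hwp : ¬ w ∣ p := by
      rintro ⟨u, rfl⟩
      rw [_root_.map_mul] at hp2
      exact hp2 (hw2.mul_right _)
    -- get an element of S not involving t₀
    have hS' : ∃ r : MvPolynomial (Fin (m' + 1)) k,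
        (r ≠ 0 ∧ g ∣ aeval f r) ∧ pderiv t₀ r = 0 := by
      by_cases hwt : pderiv t₀ w = 0
      · exact ⟨w, ⟨hw_irr.ne_zero, hgw⟩, hwt⟩
      · obtain ⟨A, B, r, hABr, hr0, hrt⟩ := elim_lemma' w p t₀ hw_irr hwt hp0 hwp
        refine ⟨r, ⟨hr0, ?_⟩, hrt⟩
        rw [← hABr, _root_.map_add, _root_.map_mul, _root_.map_mul]
        exact dvd_add (Dvd.dvd.mul_left hpdvd _) (Dvd.dvd.mul_left hgw _)
    obtain ⟨r, ⟨⟨hr0, hrdvd⟩, hrt₀⟩, hrmin⟩ :=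
      exists_minimal' (fun q : MvPolynomial (Fin (m' + 1)) k =>
        (q ≠ 0 ∧ g ∣ aeval f q) ∧ pderiv t₀ q = 0) totalDegree hS'
    obtain ⟨s, hs⟩ := no_const r hr0 hrdvd
    have hrs : ¬ g ∣ aeval f (pderiv s r) := by
      intro hdvd
      have h1 : pderiv t₀ (pderiv s r) = 0 := by
        rw [pderiv_pderiv_comm', hrt₀, _root_.map_zero]
      have h2 := hrmin (pderiv s r) ⟨⟨hs, hdvd⟩, h1⟩
      exact absurd h2 (Nat.not_le.mpr (totalDegree_pderiv_lt' hs))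
    by_cases hr2 : g ^ 2 ∣ aeval f r
    · exact mkv r hr2 ⟨s, hrs⟩
    -- final combination
    obtain ⟨cp, hcp⟩ := hpdvd
    obtain ⟨cr, hcr⟩ := hrdvd
    have hcp' : ¬ g ∣ cp := fun ⟨u, hu⟩ => hp2 ⟨u, by rw [hcp, hu]; ring⟩
    have hcr' : ¬ g ∣ cr := fun ⟨u, hu⟩ => hr2 ⟨u, by rw [hcr, hu]; ring⟩
    refine ⟨fun t => cr * aeval f (pderiv t p) - cp * aeval f (pderiv t r), ⟨t₀, ?_⟩, fun j => ?_⟩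
    · simp only [hrt₀, _root_.map_zero, mul_zero, sub_zero]
      intro hdvd
      rcases hgp.dvd_mul.mp hdvd with h1 | h1
      · exact hcr' h1
      · exact hpt₀ h1
    · have hsum : ∑ t, (cr * aeval f (pderiv t p) - cp * aeval f (pderiv t r)) * pderiv j (f t)
          = g * (cr * pderiv j cp - cp * pderiv j cr) := by
        have e1 : ∀ t : Fin (m' + 1),
            (cr * aeval f (pderiv t p) - cp * aeval f (pderiv t r)) * pderiv j (f t)
            = cr * (aeval f (pderiv t p) * pderiv j (f t))
              - cp * (aeval f (pderiv t r) * pderiv j (f t)) := fun t => by ring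
        rw [Finset.sum_congr rfl (fun t _ => e1 t), Finset.sum_sub_distrib,
          ← Finset.mul_sum, ← Finset.mul_sum, ← pderiv_aeval', ← pderiv_aeval',
          hcp, hcr, pderiv_mul, pderiv_mul]
        ring
      exact ⟨_, hsum⟩
  obtain ⟨v, ⟨t₁, hv⟩, hcol⟩ := key
  refine hd.2 g fun i _ => ?_
  exact dvd_det' hgp (Matrix.of fun j l => pderiv (i l) (f j)) v t₁ hv
    (fun l => by simpa using hcol (i l))
end

section
/- Let k be a field of characteristic zero, let f_1,…,f_m ∈ k[x_1,…,x_n] be polynomials with 1 ≤ m ≤ n, and let g ∈ k[x_1,…,x_n] be an irreducible polynomial. Then g divides dgcd(f_1,…,f_m) if and only if there exists an index i ∈ {1,…,m} and polynomials s_1,…,s_m ∈ k[x_1,…,x_n] with g ∤ s_i such that g divides s_1·d(f_1) + … + s_m·d(f_m) for every k-derivation d of k[x_1,…,x_n]. -/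
open MvPolynomial

open Matrix in
/-- Key abstract lemma: given a ring hom `φ : R →+* F` to a field whose kernel is
exactly the multiples of `g`, and the possibility of clearing denominators, an
element `g` divides all the maximal minors (with strictly increasing column choice)
of a matrix `N` iff there is a vector `s` over `R`, with some entry not divisible
by `g`, such that `g` divides all entries of `s ᵥ* N`. -/
lemma statement8_key {R F : Type*} [CommRing R] [Field F] {m n : ℕ}
    (φ : R →+* F) (g : R) (hker : ∀ p, φ p = 0 ↔ g ∣ p)
    (hlift : ∀ v : Fin m → F, ∃ (s : Fin m → R) (b : F), b ≠ 0 ∧ ∀ j, φ (s j) = b * v j)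
    (N : Matrix (Fin m) (Fin n) R) :
    (∀ i : Fin m → Fin n, StrictMono i → g ∣ (N.submatrix id i).det) ↔
      ∃ (i : Fin m) (s : Fin m → R), ¬ g ∣ s i ∧ ∀ l, g ∣ ∑ j, s j * N j l := by
  classical
  set M : Matrix (Fin m) (Fin n) F := N.map φ with hM
  have hdet : ∀ (i : Fin m → Fin n), φ ((N.submatrix id i).det) = (M.submatrix id i).det := by
    intro i
    rw [show (M.submatrix id i) = (N.submatrix id i).map φ from rfl, ← RingHom.mapMatrix_apply,
      ← RingHom.map_det]
  constructor
  · intro h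
    have hdep : ¬ LinearIndependent F (fun j => M j) := by
      intro hind
      have hrank : M.rank = m := by have := hind.rank_matrix; simp only [Fintype.card_fin] at this; exact this
      have hspan : Module.finrank F (Submodule.span F (Set.range Mᵀ)) = m := by
        exact (Matrix.rank_eq_finrank_span_cols M).symm.trans hrank
      obtain ⟨b, hbsub, hbspan, hbind⟩ := exists_linearIndependent F (Set.range Mᵀ)
      have hbfin : b.Finite := (Set.finite_range Mᵀ).subset hbsub
      haveI := hbfin.fintype
      have hcardb : Fintype.card b = m := by
        have h1' := finrank_span_set_eq_card hbind
        rw [hbspan, hspan] at h1'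
        rw [← Set.toFinset_card, ← h1']
      choose c hc using fun x : b => (hbsub x.2 : (x : Fin m → F) ∈ Set.range Mᵀ)
      have cinj : Function.Injective c := fun x y hxy =>
        Subtype.ext (by rw [← hc x, ← hc y, hxy])
      set S : Finset (Fin n) := Finset.univ.image c with hS
      have hScard : S.card = m := by
        rw [hS, Finset.card_image_of_injective _ cinj, Finset.card_univ, hcardb]
      set ι := S.orderEmbOfFin hScard with hι
      have hιmono : StrictMono ι := (S.orderEmbOfFin hScard).strictMono
      have hmem : ∀ l : Fin m, ∃ x : b, c x = ι l := by
        intro l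
        obtain ⟨x, -, hx⟩ := Finset.mem_image.mp (S.orderEmbOfFin_mem hScard l)
        exact ⟨x, hx⟩
      choose e he using hmem
      have hecol : ∀ l, Mᵀ (ι l) = (e l : Fin m → F) := fun l => by rw [← he l, hc]
      have einj : Function.Injective e := by
        intro l l' hee
        have : ι l = ι l' := by rw [← he l, ← he l', hee]
        exact hιmono.injective this
      have hind2 : LinearIndependent F (fun l : Fin m => (M.submatrix id ι)ᵀ l) := by
        have heq : (fun l : Fin m => (M.submatrix id ι)ᵀ l)
            = ((↑) : b → Fin m → F) ∘ e := by
          funext l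
          ext j
          simpa [Matrix.submatrix, Matrix.transpose] using congrFun (hecol l) j
        rw [heq]
        exact hbind.comp e einj
      have hdetne : (M.submatrix id ι).det ≠ 0 := by
        have hunit := Matrix.linearIndependent_cols_iff_isUnit.mp hind2
        exact ((Matrix.isUnit_iff_isUnit_det _).mp hunit).ne_zero
      have := h ι hιmono
      rw [← hker, hdet] at this
      exact hdetne this
    obtain ⟨v, hv0, i0, hvi⟩ := Fintype.not_linearIndependent_iff.mp hdep
    obtain ⟨s, b, hb, hs⟩ := hlift v
    refine ⟨i0, s, ?_, ?_⟩
    · intro hdvd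
      have hz : φ (s i0) = 0 := (hker _).mpr hdvd
      rw [hs i0] at hz
      exact (mul_ne_zero hb hvi) hz
    · intro l
      rw [← hker]
      have hcol : ∑ j, v j * M j l = 0 := by
        have := congrFun hv0 l
        simpa [Finset.sum_apply] using this
      calc φ (∑ j, s j * N j l) = ∑ j, φ (s j) * φ (N j l) := by
            rw [map_sum]; exact Finset.sum_congr rfl fun j _ => map_mul φ _ _
        _ = b * ∑ j, v j * M j l := by
            rw [Finset.mul_sum]
            exact Finset.sum_congr rfl fun j _ => by rw [hs j, hM]; simp [Matrix.map]; ring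
        _ = 0 := by rw [hcol, mul_zero]
  · rintro ⟨i, s, hsi, hall⟩
    intro ι hι
    rw [← hker, hdet]
    have hvm : (fun j => φ (s j)) ᵥ* (M.submatrix id ι) = 0 := by
      ext l
      have := hall (ι l)
      rw [← hker] at this
      calc ((fun j => φ (s j)) ᵥ* (M.submatrix id ι)) l
          = ∑ j, φ (s j) * φ (N j (ι l)) := by
            simp [Matrix.vecMul, dotProduct, hM, Matrix.map]
        _ = φ (∑ j, s j * N j (ι l)) := by
            rw [map_sum]; exact Finset.sum_congr rfl fun j _ => (map_mul φ _ _).symm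
        _ = 0 := this
    have hvne : (fun j => φ (s j)) ≠ 0 := by
      intro hzero
      apply hsi
      rw [← hker]
      exact congrFun hzero i
    exact Matrix.exists_vecMul_eq_zero_iff.mp ⟨_, hvne, hvm⟩

/-- Every `k`-derivation of `k[x₁,…,xₙ]` is the combination of the partial
derivatives with coefficients `D (X l)`. -/
lemma statement8_derivation_apply_eq_sum {k : Type*} [Field k] {n : ℕ}
    (D : Derivation k (MvPolynomial (Fin n) k) (MvPolynomial (Fin n) k))
    (p : MvPolynomial (Fin n) k) :
    D p = ∑ l : Fin n, pderiv l p * D (X l) := by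
  classical
  induction p using MvPolynomial.induction_on with
  | C a => simp [derivation_C]
  | add p q hp hq => simp [hp, hq, add_mul, Finset.sum_add_distrib]
  | mul_X p i hp =>
    rw [Derivation.leibniz, smul_eq_mul, smul_eq_mul, hp, Finset.mul_sum]
    simp only [pderiv_mul, pderiv_X, Pi.single_apply, add_mul, Finset.sum_add_distrib,
      ite_mul, one_mul, zero_mul, mul_ite, mul_zero, Finset.sum_ite_eq, Finset.mem_univ, if_true]
    rw [add_comm, mul_one]
    congr 1
    exact Finset.sum_congr rfl fun l _ => by ring

/-- Lemma 1.a: `g ∣ dgcd(f₁,…,f_m)` iff there are an index `i` and polynomials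
`s₁,…,s_m` with `g ∤ sᵢ` such that `g ∣ s₁·d(f₁) + … + s_m·d(f_m)` for every
`k`-derivation `d` of `k[x₁,…,xₙ]`. -/
theorem statement8 {k : Type*} [Field k] [CharZero k] {m n : ℕ}
    (hm : 1 ≤ m) (hmn : m ≤ n)
    (f : Fin m → MvPolynomial (Fin n) k)
    (g : MvPolynomial (Fin n) k) (hg : Irreducible g)
    (d : MvPolynomial (Fin n) k) (hd : IsDgcd f d) :
    g ∣ d ↔
      ∃ (i : Fin m) (s : Fin m → MvPolynomial (Fin n) k), ¬ g ∣ s i ∧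
        ∀ D : Derivation k (MvPolynomial (Fin n) k) (MvPolynomial (Fin n) k),
          g ∣ ∑ j, s j * D (f j) := by
  classical
  have hgp : Prime g := UniqueFactorizationMonoid.irreducible_iff_prime.mp hg
  haveI hIp : (Ideal.span {g}).IsPrime := (Ideal.span_singleton_prime hgp.ne_zero).mpr hgp
  let φ : MvPolynomial (Fin n) k →+*
      FractionRing (MvPolynomial (Fin n) k ⧸ Ideal.span {g}) :=
    (algebraMap _ _).comp (Ideal.Quotient.mk (Ideal.span {g}))
  have hker : ∀ p, φ p = 0 ↔ g ∣ p := by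
    intro p
    rw [RingHom.comp_apply, map_eq_zero_iff _ (IsFractionRing.injective _ _),
      Ideal.Quotient.eq_zero_iff_mem, Ideal.mem_span_singleton]
  have hlift : ∀ v : Fin m → FractionRing (MvPolynomial (Fin n) k ⧸ Ideal.span {g}),
      ∃ (s : Fin m → MvPolynomial (Fin n) k)
        (b : FractionRing (MvPolynomial (Fin n) k ⧸ Ideal.span {g})),
        b ≠ 0 ∧ ∀ j, φ (s j) = b * v j := by
    intro v
    obtain ⟨b, hb⟩ := IsLocalization.exist_integer_multiples_of_finite
      (nonZeroDivisors (MvPolynomial (Fin n) k ⧸ Ideal.span {g})) v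
    choose a ha using hb
    choose s hs using fun j => Ideal.Quotient.mk_surjective (I := Ideal.span {g}) (a j)
    refine ⟨s, algebraMap _ _ (b : MvPolynomial (Fin n) k ⧸ Ideal.span {g}), ?_, ?_⟩
    · simpa [map_eq_zero_iff _ (IsFractionRing.injective _ _)] using
        nonZeroDivisors.coe_ne_zero b
    · intro j
      rw [RingHom.comp_apply, hs j, ha j]
      exact Algebra.smul_def _ _
  -- the matrix of partial derivatives
  let N : Matrix (Fin m) (Fin n) (MvPolynomial (Fin n) k) :=
    Matrix.of fun j l => pderiv l (f j)
  have hjac : ∀ i : Fin m → Fin n, jacDet f i = (N.submatrix id i).det := by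
    intro i; rfl
  have hkey := statement8_key φ g hker hlift N
  have h1 : g ∣ d ↔ ∀ i : Fin m → Fin n, StrictMono i → g ∣ jacDet f i :=
    ⟨fun h i hi => h.trans (hd.1 i hi), hd.2 g⟩
  rw [h1]
  simp_rw [hjac]
  rw [hkey]
  constructor
  · rintro ⟨i, s, hsi, hall⟩
    refine ⟨i, s, hsi, ?_⟩
    intro D
    have hrw : ∑ j, s j * D (f j) = ∑ l, (∑ j, s j * N j (l : Fin n)) * D (X l) := by
      simp_rw [statement8_derivation_apply_eq_sum D (f _), Finset.mul_sum, Finset.sum_mul]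
      rw [Finset.sum_comm]
      exact Finset.sum_congr rfl fun l _ => Finset.sum_congr rfl fun j _ => by
        show s j * (pderiv l (f j) * D (X l)) = s j * pderiv l (f j) * D (X l)
        ring
    rw [hrw]
    exact Finset.dvd_sum fun l _ => (hall l).mul_right _
  · rintro ⟨i, s, hsi, hall⟩
    exact ⟨i, s, hsi, fun l => hall (pderiv l)⟩
end

section
/- Let k be a field of characteristic zero, let f_1,…,f_m ∈ k[x_1,…,x_n] be polynomials with 1 ≤ m ≤ n, and let g ∈ k[x_1,…,x_n] be an irreducible polynomial. Fix i ∈ {1,…,m} and suppose there exist polynomials s_1,…,s_m ∈ k[x_1,…,x_n] with g ∤ s_i such that g divides s_1·d(f_1) + … + s_m·d(f_m) for every k-derivation d of k[x_1,…,x_n]. Then, denoting by f̄ the image of a polynomial f in the quotient domain k[x_1,…,x_n]/(g), the element f̄_i is algebraic over the subfield k(f̄_1,…,f̄_{i-1}, f̄_{i+1},…,f̄_m) of the field of fractions of k[x_1,…,x_n]/(g). -/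
open MvPolynomial
set_option maxHeartbeats 1000000
set_option linter.unusedSectionVars false
set_option synthInstance.maxHeartbeats 400000

private theorem isAlgebraic_adjoin_of_injective {k A B : Type*} [CommRing k] [CommRing A]
    [CommRing B] [Algebra k A] [Algebra k B] (ψ : A →ₐ[k] B) (hψ : Function.Injective ψ)
    (S₀ : Set A) (x : A)
    (h : IsAlgebraic (Algebra.adjoin k (⇑ψ '' S₀)) (ψ x)) :
    IsAlgebraic (Algebra.adjoin k S₀) x := by
  obtain ⟨p, hp, hpx⟩ := h
  let e : (Algebra.adjoin k S₀) ≃ₐ[k] (Algebra.adjoin k (⇑ψ '' S₀)) :=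
    ((Algebra.adjoin k S₀).equivMapOfInjective ψ hψ).trans
      (Subalgebra.equivOfEq _ _ (ψ.map_adjoin S₀))
  have he : ∀ c, (algebraMap (Algebra.adjoin k (⇑ψ '' S₀)) B) (e c)
      = ψ (algebraMap (Algebra.adjoin k S₀) A c) := fun c => by
    simp [e, Subalgebra.algebraMap_eq]
  refine ⟨p.map e.symm.toAlgHom.toRingHom,
    (Polynomial.map_ne_zero_iff e.symm.toRingEquiv.injective).mpr hp, ?_⟩
  apply hψ
  rw [map_zero, ← hpx]
  show ψ.toRingHom _ = _
  rw [Polynomial.aeval_def, Polynomial.hom_eval₂, Polynomial.eval₂_map, Polynomial.aeval_def]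
  congr 1
  ext c
  show ψ (algebraMap (Algebra.adjoin k S₀) A (e.symm c)) = algebraMap _ B c
  rw [← he (e.symm c), AlgEquiv.apply_symm_apply]

/-- A copy of the dual numbers with no algebra instances. -/
private def Dual' (L : Type*) : Type _ := TrivSqZeroExt L L

namespace Dual'

variable {L : Type*} [CommRing L]

private instance : CommRing (Dual' L) := inferInstanceAs (CommRing (TrivSqZeroExt L L))

private def fst (x : Dual' L) : L := TrivSqZeroExt.fst (R := L) (M := L) x
private def snd (x : Dual' L) : L := TrivSqZeroExt.snd (R := L) (M := L) x
private def mk (a b : L) : Dual' L := ((a, b) : TrivSqZeroExt L L)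

private theorem ext {x y : Dual' L} (h1 : fst x = fst y) (h2 : snd x = snd y) : x = y :=
  TrivSqZeroExt.ext h1 h2

@[simp] private theorem fst_mk (a b : L) : fst (mk a b) = a := rfl
@[simp] private theorem snd_mk (a b : L) : snd (mk a b) = b := rfl
@[simp] private theorem fst_one : fst (1 : Dual' L) = 1 := rfl
@[simp] private theorem snd_one : snd (1 : Dual' L) = 0 := rfl
@[simp] private theorem fst_zero : fst (0 : Dual' L) = 0 := rfl
@[simp] private theorem snd_zero : snd (0 : Dual' L) = 0 := rfl

private theorem fst_add (x y : Dual' L) : fst (x + y) = fst x + fst y := rfl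
private theorem snd_add (x y : Dual' L) : snd (x + y) = snd x + snd y := rfl
private theorem fst_sub (x y : Dual' L) : fst (x - y) = fst x - fst y := rfl
private theorem snd_sub (x y : Dual' L) : snd (x - y) = snd x - snd y := rfl

private theorem fst_mul (x y : Dual' L) : fst (x * y) = fst x * fst y :=
  TrivSqZeroExt.fst_mul (R := L) (M := L) x y

private theorem snd_mul (x y : Dual' L) : snd (x * y) = fst x * snd y + fst y * snd x := by
  have h := TrivSqZeroExt.snd_mul (R := L) (M := L) x y
  rw [op_smul_eq_smul, smul_eq_mul, smul_eq_mul] at h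
  exact h

private def fstHom : Dual' L →+* L where
  toFun := fst
  map_one' := fst_one
  map_mul' := fst_mul
  map_zero' := fst_zero
  map_add' := fst_add

private def inlHom : L →+* Dual' L where
  toFun := fun a => mk a 0
  map_one' := rfl
  map_mul' := fun a b => by refine ext ?_ ?_ <;> simp [fst_mul, snd_mul]
  map_zero' := rfl
  map_add' := fun a b => by refine ext ?_ ?_ <;> simp [fst_add, snd_add]

end Dual'

theorem key_deriv {K L : Type*} [Field K] [Field L] [Algebra K L] [CharZero K]
    {t : L} (ht : Transcendental K t) : ∃ δ : Derivation K L L, δ t = 1 := by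
  classical
  haveI : CharZero L := charZero_of_injective_algebraMap (algebraMap K L).injective
  -- a transcendence basis containing t
  have h1 : AlgebraicIndependent K ((↑) : ({t} : Set L) → L) := by
    rw [algebraicIndependent_unique_type_iff]
    simpa using ht
  obtain ⟨u, htu, hmax⟩ :=
    exists_maximal_algebraicIndependent ({t} : Set L) Set.univ (Set.subset_univ _) h1
  have hu : AlgebraicIndependent K ((↑) : u → L) := hmax.prop.1
  have hbasis : IsTranscendenceBasis K ((↑) : u → L) := by
    refine ⟨hu, fun s hs hus => ?_⟩
    simp only [Subtype.range_coe_subtype, Set.setOf_mem_eq] at *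
    exact hmax.eq_of_le ⟨hs, Set.subset_univ _⟩ hus
  have htmem : t ∈ u := htu rfl
  set x : u → L := ((↑) : u → L) with hx
  set R : Subalgebra K L := Algebra.adjoin K (Set.range x) with hR
  haveI : Algebra.IsAlgebraic R L := hbasis.isAlgebraic
  let i₀ : u := ⟨t, htmem⟩
  -- the basic derivation on R: ∂/∂t
  have hrharpo : ∀ r : R, (aeval x) (hu.repr r) = (r : L) := fun r => hu.aeval_repr r
  let δ₀ : Derivation K R L :=
  { toLinearMap := (aeval x).toLinearMap ∘ₗ (pderiv i₀).toLinearMap ∘ₗ hu.repr.toLinearMap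
    map_one_eq_zero' := by
      show aeval x (pderiv i₀ (hu.repr 1)) = 0
      rw [map_one, Derivation.map_one_eq_zero, map_zero]
    leibniz' := fun a b => by
      show aeval x (pderiv i₀ (hu.repr (a * b))) = _
      rw [map_mul, Derivation.leibniz, smul_eq_mul, smul_eq_mul, map_add, map_mul, map_mul,
        hrharpo, hrharpo]
      show _ = a • (aeval x (pderiv i₀ (hu.repr b))) + b • (aeval x (pderiv i₀ (hu.repr a)))
      rw [Algebra.smul_def, Algebra.smul_def, Subalgebra.algebraMap_eq]
      rfl }
  have hδ₀ : ∀ r : R, δ₀ r = aeval x (pderiv i₀ (hu.repr r)) := fun r => rfl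
  have htR : t ∈ R := Algebra.subset_adjoin ⟨i₀, rfl⟩
  have hδ₀t : δ₀ ⟨t, htR⟩ = 1 := by
    have h2 : hu.aevalEquiv (X i₀) = (⟨t, htR⟩ : R) := by
      apply Subtype.ext
      simp [AlgebraicIndependent.aevalEquiv_apply_coe]
      rfl
    have h3 : hu.repr ⟨t, htR⟩ = X i₀ := by
      rw [AlgebraicIndependent.repr, ← h2]
      simp
    rw [hδ₀, h3, pderiv_X, Pi.single_eq_same, map_one]
  -- étale structure
  haveI : CharZero R := ⟨fun a b hab => by
    have := congrArg (algebraMap R L) hab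
    rw [map_natCast, map_natCast] at this
    exact Nat.cast_injective this⟩
  haveI : NoZeroSMulDivisors R L :=
    ⟨fun {c x} h => by
      rw [Algebra.smul_def, mul_eq_zero] at h
      exact h.imp_left (fun h' => Subtype.ext h')⟩
  letI : Algebra (FractionRing R) L := FractionRing.liftAlgebra R L
  haveI : IsScalarTower R (FractionRing R) L := FractionRing.isScalarTower_liftAlgebra R L
  haveI : CharZero (FractionRing R) :=
    charZero_of_injective_algebraMap (IsFractionRing.injective R (FractionRing R))
  haveI : Algebra.IsAlgebraic (FractionRing R) L := ⟨fun z =>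
    (Algebra.IsAlgebraic.isAlgebraic (R := R) z).extendScalars
      (IsFractionRing.injective R (FractionRing R))⟩
  haveI : Algebra.IsIntegral (FractionRing R) L := Algebra.IsAlgebraic.isIntegral
  haveI : Algebra.IsSeparable (FractionRing R) L := Algebra.IsSeparable.of_integral _ _
  haveI : Algebra.FormallyEtale R (FractionRing R) :=
    Algebra.FormallyEtale.of_isLocalization (nonZeroDivisors R)
  haveI : Algebra.FormallyEtale (FractionRing R) L :=
    Algebra.FormallyEtale.of_isSeparable (FractionRing R) L
  haveI : Algebra.FormallyEtale R L := Algebra.FormallyEtale.comp R (FractionRing R) L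
  haveI : Algebra.FormallySmooth R L := inferInstance
  -- dual-number lifting
  let φ₀ : ↥R →+* Dual' L :=
  { toFun := fun r => Dual'.mk (algebraMap R L r) (δ₀ r)
    map_one' := by
      refine Dual'.ext ?_ ?_ <;> simp
    map_mul' := fun r s => by
      refine Dual'.ext ?_ ?_
      · simp [Dual'.fst_mul]
      · rw [Dual'.snd_mul]
        simp only [Dual'.fst_mk, Dual'.snd_mk]
        show δ₀ (r * s) = _
        rw [Derivation.leibniz, Algebra.smul_def, Algebra.smul_def, Subalgebra.algebraMap_eq]
    map_zero' := by
      refine Dual'.ext ?_ ?_ <;> simp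
    map_add' := fun r s => by
      refine Dual'.ext ?_ ?_ <;>
        simp [Dual'.fst_add, Dual'.snd_add, Dual'.fst_mk, Dual'.snd_mk] }
  letI : Algebra ↥R (Dual' L) := φ₀.toAlgebra
  have halgB : ∀ r : R, algebraMap R (Dual' L) r = φ₀ r := fun r => rfl
  set I : Ideal (Dual' L) := RingHom.ker (Dual'.fstHom (L := L)) with hIdef
  have hIsq : I ^ 2 = ⊥ := by
    rw [pow_two, eq_bot_iff]
    refine (Ideal.mul_le).mpr fun a ha b hb => ?_
    rw [Ideal.mem_bot]
    rw [hIdef, RingHom.mem_ker] at ha hb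
    have ha' : Dual'.fst a = 0 := ha
    have hb' : Dual'.fst b = 0 := hb
    refine Dual'.ext ?_ ?_
    · rw [Dual'.fst_mul, ha', zero_mul, Dual'.fst_zero]
    · rw [Dual'.snd_mul, ha', hb', zero_mul, zero_mul, add_zero, Dual'.snd_zero]
  let fhat : L →ₐ[R] (Dual' L) ⧸ I :=
  { toRingHom := (Ideal.Quotient.mk I).comp (Dual'.inlHom (L := L))
    commutes' := fun r => by
      show Ideal.Quotient.mk I (Dual'.mk (algebraMap R L r) 0) =
        algebraMap R ((Dual' L) ⧸ I) r
      have h5 : algebraMap R ((Dual' L) ⧸ I) r = Ideal.Quotient.mk I (φ₀ r) := rfl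
      rw [h5, Ideal.Quotient.mk_eq_mk_iff_sub_mem, hIdef, RingHom.mem_ker, map_sub,
        sub_eq_zero]
      rfl }
  obtain ⟨gl, hgl⟩ := Algebra.FormallySmooth.exists_lift I ⟨2, hIsq⟩ fhat
  have hfst : ∀ z : L, Dual'.fst (gl z) = z := fun z => by
    have h4 := DFunLike.congr_fun hgl z
    have h5 : Ideal.Quotient.mk I (gl z) = Ideal.Quotient.mk I (Dual'.mk z 0) := h4
    rw [Ideal.Quotient.mk_eq_mk_iff_sub_mem, hIdef, RingHom.mem_ker, map_sub,
      sub_eq_zero] at h5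
    exact h5
  have hglR : ∀ r : R, gl (algebraMap R L r) = φ₀ r := fun r => gl.commutes r
  -- the derivation
  let dl : L →ₗ[K] L :=
  { toFun := fun z => Dual'.snd (gl z)
    map_add' := fun a b => by
      show Dual'.snd (gl (a + b)) = Dual'.snd (gl a) + Dual'.snd (gl b)
      rw [map_add, Dual'.snd_add]
    map_smul' := fun c z => by
      show Dual'.snd (gl (c • z)) = c • Dual'.snd (gl z)
      rw [Algebra.smul_def, map_mul, Dual'.snd_mul]
      have h7 : gl (algebraMap K L c) = φ₀ (algebraMap K R c) := by
        rw [IsScalarTower.algebraMap_apply K R L c, hglR]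
      rw [h7]
      show (algebraMap R L (algebraMap K R c)) * Dual'.snd (gl z)
          + Dual'.fst (gl z) * δ₀ (algebraMap K R c) = _
      rw [Derivation.map_algebraMap, mul_zero, add_zero,
        ← IsScalarTower.algebraMap_apply K R L c, ← Algebra.smul_def] }
  refine ⟨{ toLinearMap := dl
            map_one_eq_zero' := by
              show Dual'.snd (gl 1) = 0
              rw [map_one, Dual'.snd_one]
            leibniz' := fun a b => by
              show Dual'.snd (gl (a * b)) = a • Dual'.snd (gl b) + b • Dual'.snd (gl a)
              rw [map_mul, Dual'.snd_mul, hfst, hfst, smul_eq_mul, smul_eq_mul] }, ?_⟩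
  show Dual'.snd (gl t) = 1
  have h8 : t = algebraMap R L ⟨t, htR⟩ := rfl
  rw [h8, hglR]
  show δ₀ ⟨t, htR⟩ = 1
  exact hδ₀t

theorem main_aux {k : Type*} [Field k] [CharZero k] {m n : ℕ}
    (f : Fin m → MvPolynomial (Fin n) k) (g : MvPolynomial (Fin n) k)
    (i : Fin m) (s : Fin m → MvPolynomial (Fin n) k)
    (hs : ∀ D : Derivation k (MvPolynomial (Fin n) k) (MvPolynomial (Fin n) k),
      g ∣ ∑ j, s j * D (f j))
    (A : Type*) [CommRing A] [IsDomain A] [Algebra k A]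
    (π : MvPolynomial (Fin n) k →ₐ[k] A) (hπg : π g = 0) (hπs : π (s i) ≠ 0)
    (L : Type*) [Field L] [Algebra A L] [IsFractionRing A L] [Algebra k L]
    [IsScalarTower k A L] :
    IsAlgebraic (Algebra.adjoin k ((fun j => π (f j)) '' {j : Fin m | j ≠ i})) (π (f i)) := by
  classical
  by_contra hcon
  set ψ : A →ₐ[k] L := IsScalarTower.toAlgHom k A L with hψdef
  have hψ : Function.Injective ψ := IsFractionRing.injective A L
  set φ : MvPolynomial (Fin n) k →ₐ[k] L := ψ.comp π with hφdef
  have hφ : ∀ p, φ p = ψ (π p) := fun p => rfl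
  set S₀ : Set A := (fun j => π (f j)) '' {j : Fin m | j ≠ i} with hS₀
  set R : Subalgebra k L := Algebra.adjoin k (⇑ψ '' S₀) with hR
  -- characteristic zero facts
  haveI : CharZero L := charZero_of_injective_algebraMap (algebraMap k L).injective
  haveI : CharZero R := ⟨fun a b hab => by
    have := congrArg (algebraMap R L) hab
    rw [map_natCast, map_natCast] at this
    exact Nat.cast_injective this⟩
  -- the fraction field of R inside L
  haveI : NoZeroSMulDivisors R L :=
    ⟨fun {c x} h => by
      rw [Algebra.smul_def, mul_eq_zero] at h
      exact h.imp_left (fun h' => Subtype.ext h')⟩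
  letI : Algebra (FractionRing R) L := FractionRing.liftAlgebra R L
  haveI : IsScalarTower R (FractionRing R) L := FractionRing.isScalarTower_liftAlgebra R L
  haveI : CharZero (FractionRing R) :=
    charZero_of_injective_algebraMap (IsFractionRing.injective R (FractionRing R))
  have htrans : Transcendental (FractionRing R) (ψ (π (f i))) := by
    intro halg
    exact hcon <| isAlgebraic_adjoin_of_injective ψ hψ S₀ (π (f i)) <|
      (IsFractionRing.isAlgebraic_iff R (FractionRing R) L).mpr halg
  obtain ⟨δ, hδt⟩ := key_deriv htrans
  -- restrict to k
  haveI : IsScalarTower k (FractionRing R) L := IsScalarTower.of_algebraMap_eq fun c => by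
    rw [IsScalarTower.algebraMap_apply k R (FractionRing R),
      ← IsScalarTower.algebraMap_apply R (FractionRing R) L,
      ← IsScalarTower.algebraMap_apply k R L]
  let δ' : Derivation k L L := δ.restrictScalars k
  have hkill : ∀ z : L, z ∈ R → δ' z = 0 := fun z hz => by
    have hzz : z = algebraMap (FractionRing R) L (algebraMap R (FractionRing R) ⟨z, hz⟩) := by
      rw [← IsScalarTower.algebraMap_apply R (FractionRing R) L]; rfl
    show δ z = 0
    rw [hzz, Derivation.map_algebraMap]
  -- chain rule
  letI : Algebra (MvPolynomial (Fin n) k) L := φ.toRingHom.toAlgebra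
  haveI : IsScalarTower k (MvPolynomial (Fin n) k) L :=
    IsScalarTower.of_algebraMap_eq fun c => (φ.commutes c).symm
  haveI : IsScalarTower (MvPolynomial (Fin n) k) L L :=
    ⟨fun p x y => mul_assoc (φ p) x y⟩
  have hsmul : ∀ (p : MvPolynomial (Fin n) k) (z : L), p • z = φ p * z := fun p z => rfl
  let c : Fin n → L := fun l => δ' (φ (X l))
  let D2 : Derivation k (MvPolynomial (Fin n) k) L :=
  { toFun := fun p => ∑ l, φ (pderiv l p) * c l
    map_add' := fun p q => by
      simp only [map_add, add_mul, Finset.sum_add_distrib]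
    map_smul' := fun r p => by
      simp only [Derivation.map_smul, map_smul, RingHom.id_apply, Finset.smul_sum,
        smul_mul_assoc]
    map_one_eq_zero' := by
      simp only [LinearMap.coe_mk, AddHom.coe_mk]
      simp
    leibniz' := fun p q => by
      simp only [LinearMap.coe_mk, AddHom.coe_mk, Derivation.leibniz, smul_eq_mul, map_add,
        map_mul, add_mul, Finset.sum_add_distrib, hsmul, Finset.mul_sum]
      congr 1 <;> exact Finset.sum_congr rfl fun l _ => by ring }
  have hD2 : ∀ p, D2 p = ∑ l, φ (pderiv l p) * c l := fun p => rfl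
  have hchain : ∀ p, δ' (φ p) = ∑ l, φ (pderiv l p) * c l := by
    have hext : δ'.compAlgebraMap (MvPolynomial (Fin n) k) = D2 := by
      apply MvPolynomial.derivation_ext
      intro l
      rw [hD2]
      show δ' (φ (X l)) = _
      rw [Finset.sum_eq_single l]
      · simp [c, pderiv_X]
      · intro b _ hbl
        rw [pderiv_X, Pi.single_eq_of_ne (Ne.symm hbl)]  -- careful direction
        simp
      · intro h; exact absurd (Finset.mem_univ l) h
    intro p
    have := DFunLike.congr_fun hext p
    exact this
  -- assemble
  have hzero : ∀ l, φ (∑ j, s j * pderiv l (f j)) = 0 := fun l => by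
    obtain ⟨q, hq⟩ := hs (pderiv l)
    rw [hq, map_mul, hφ, hπg, map_zero, zero_mul]
  have hmem : ∀ j, j ≠ i → φ (f j) ∈ R := fun j hj =>
    Algebra.subset_adjoin ⟨π (f j), ⟨j, hj, rfl⟩, rfl⟩
  have hE : ∑ j, φ (s j) * δ' (φ (f j)) = φ (s i) := by
    rw [Finset.sum_eq_single i]
    · show φ (s i) * δ' (ψ (π (f i))) = φ (s i)
      show φ (s i) * δ (ψ (π (f i))) = φ (s i)
      rw [hδt, mul_one]
    · intro j _ hj
      rw [hkill _ (hmem j hj), mul_zero]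
    · intro h; exact absurd (Finset.mem_univ i) h
  have hE0 : ∑ j, φ (s j) * δ' (φ (f j)) = 0 := by
    calc ∑ j, φ (s j) * δ' (φ (f j))
        = ∑ j, φ (s j) * ∑ l, φ (pderiv l (f j)) * c l := by
          exact Finset.sum_congr rfl fun j _ => by rw [hchain]
      _ = ∑ j, ∑ l, φ (s j * pderiv l (f j)) * c l := by
          exact Finset.sum_congr rfl fun j _ => by
            rw [Finset.mul_sum]
            exact Finset.sum_congr rfl fun l _ => by rw [map_mul]; ring
      _ = ∑ l, ∑ j, φ (s j * pderiv l (f j)) * c l := Finset.sum_comm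
      _ = ∑ l, φ (∑ j, s j * pderiv l (f j)) * c l := by
          exact Finset.sum_congr rfl fun l _ => by rw [← Finset.sum_mul, ← map_sum]
      _ = 0 := by
          rw [Finset.sum_eq_zero]
          intro l _
          rw [hzero, zero_mul]
  rw [hE] at hE0
  exact hπs (hψ (by rw [map_zero, ← hφ, hE0]))

/-- Lemma 1.b: if for some index `i` there exist `s₁,…,s_m` with `g ∤ sᵢ` such that
`g ∣ s₁·d(f₁) + … + s_m·d(f_m)` for every `k`-derivation `d` of `k[x₁,…,xₙ]`, then
the image `f̄ᵢ` of `fᵢ` in `k[x₁,…,xₙ]/(g)` is algebraic over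
`k(f̄₁,…,f̄_{i-1},f̄_{i+1},…,f̄_m)`.  (Since the quotient is a domain, being
algebraic over this subfield of the fraction field is equivalent to being
algebraic over the subalgebra `k[f̄₁,…,f̄_{i-1},f̄_{i+1},…,f̄_m]`, which is how
the conclusion is stated.) -/
theorem statement9 {k : Type*} [Field k] [CharZero k] {m n : ℕ}
    (hm : 1 ≤ m) (hmn : m ≤ n)
    (f : Fin m → MvPolynomial (Fin n) k)
    (g : MvPolynomial (Fin n) k) (hg : Irreducible g)
    (i : Fin m) (s : Fin m → MvPolynomial (Fin n) k) (hsi : ¬ g ∣ s i)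
    (hs : ∀ D : Derivation k (MvPolynomial (Fin n) k) (MvPolynomial (Fin n) k),
      g ∣ ∑ j, s j * D (f j)) :
    IsAlgebraic
      (Algebra.adjoin k
        ((fun j => Ideal.Quotient.mk (Ideal.span {g}) (f j)) '' {j : Fin m | j ≠ i}))
      (Ideal.Quotient.mk (Ideal.span {g}) (f i)) := by
  haveI hprime : (Ideal.span {g}).IsPrime := by
    rw [Ideal.span_singleton_prime hg.ne_zero]
    exact UniqueFactorizationMonoid.irreducible_iff_prime.mp hg
  haveI : IsDomain (MvPolynomial (Fin n) k ⧸ Ideal.span {g}) := Ideal.Quotient.isDomain _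
  have hπg : Ideal.Quotient.mkₐ k (Ideal.span {g}) g = 0 := by
    rw [Ideal.Quotient.mkₐ_eq_mk, Ideal.Quotient.eq_zero_iff_mem]
    exact Ideal.subset_span rfl
  have hπs : Ideal.Quotient.mkₐ k (Ideal.span {g}) (s i) ≠ 0 := by
    rw [Ideal.Quotient.mkₐ_eq_mk, Ne, Ideal.Quotient.eq_zero_iff_mem, Ideal.mem_span_singleton]
    exact hsi
  exact main_aux f g i s hs _ (Ideal.Quotient.mkₐ k (Ideal.span {g})) hπg hπs
    (FractionRing (MvPolynomial (Fin n) k ⧸ Ideal.span {g}))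
end

section
/- Let k be a field of characteristic zero and let 1 ≤ m ≤ n. Suppose that for all polynomials f_1,…,f_m ∈ k[x_1,…,x_n], if dgcd(f_1,…,f_m) is a nonzero element of k then the subalgebra k[f_1,…,f_m] is algebraically closed in k[x_1,…,x_n]. Then the Jacobian Conjecture holds in m variables over k: for all polynomials g_1,…,g_m ∈ k[x_1,…,x_m], if the Jacobian determinant jac(g_1,…,g_m) = det(∂g_j/∂x_l) is a nonzero element of k, then k[g_1,…,g_m] = k[x_1,…,x_m]. -/
open MvPolynomial

/-- A subalgebra `R` of a domain `A` is algebraically closed in `A` if every element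
of `A` algebraic over `R` (equivalently, over the field of fractions of `R`)
belongs to `R`. -/
def AlgClosedIn {k A : Type*} [Field k] [CommRing A] [Algebra k A]
    (R : Subalgebra k A) : Prop :=
  ∀ a : A, IsAlgebraic R a → a ∈ R

namespace Statement10Aux

variable {k : Type*} [Field k] {m : ℕ}

/-- Coefficient formula for `pderiv`. -/
lemma coeff_pderiv {σ : Type*} [DecidableEq σ] (P : MvPolynomial σ k) (i : σ) (t : σ →₀ ℕ) :
    coeff t (pderiv i P) = (t i + 1 : ℕ) * coeff (t + Finsupp.single i 1) P := by
  induction P using MvPolynomial.induction_on' with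
  | monomial u a =>
      rw [pderiv_monomial, coeff_monomial, coeff_monomial]
      by_cases h : u = t + Finsupp.single i 1
      · subst h
        have h1 : t + Finsupp.single i 1 - Finsupp.single i 1 = t := by
          ext a
          rcases eq_or_ne a i with rfl | ha
          · simp [Finsupp.sub_apply, Finsupp.add_apply, Finsupp.single_apply]
          · simp [Finsupp.sub_apply, Finsupp.add_apply, Finsupp.single_apply, ha]
        have h2 : ((t + Finsupp.single i 1 : _ →₀ ℕ)) i = t i + 1 := by
          simp [Finsupp.add_apply, Finsupp.single_apply]
        rw [if_pos h1, if_pos rfl, h2]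
        push_cast
        ring
      · rw [if_neg h, mul_zero]
        by_cases h2 : u - Finsupp.single i 1 = t
        · rw [if_pos h2]
          by_cases h3 : u i = 0
          · simp [h3]
          · exfalso
            apply h
            have hle : Finsupp.single i 1 ≤ u := by
              rw [Finsupp.single_le_iff]
              omega
            rw [← h2, tsub_add_cancel_of_le hle]
        · rw [if_neg h2]
  | add p q hp hq =>
      simp [map_add, coeff_add, hp, hq, mul_add]

/-- A polynomial with vanishing partial derivatives is constant (char zero). -/
lemma eq_C_of_pderiv_eq_zero [CharZero k] {σ : Type*} [DecidableEq σ]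
    {P : MvPolynomial σ k} (h : ∀ i, pderiv i P = 0) :
    P = C (coeff 0 P) := by
  ext s
  by_cases hs : s = 0
  · subst hs; simp
  · rw [coeff_C, if_neg (Ne.symm hs)]
    obtain ⟨i, hi⟩ : ∃ i, s i ≠ 0 := by
      by_contra hcon
      push_neg at hcon
      exact hs (Finsupp.ext fun a => hcon a)
    set t := s - Finsupp.single i 1 with ht
    have hle : Finsupp.single i 1 ≤ s := by
      rw [Finsupp.single_le_iff]; omega
    have hst : t + Finsupp.single i 1 = s := tsub_add_cancel_of_le hle
    have := coeff_pderiv P i t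
    rw [h i, hst] at this
    simp only [coeff_zero] at this
    have hne : ((t i + 1 : ℕ) : k) ≠ 0 := Nat.cast_ne_zero.2 (Nat.succ_ne_zero _)
    exact (mul_eq_zero.1 this.symm).resolve_left hne

/-- totalDegree of pderiv drops. -/
lemma totalDegree_pderiv_le {σ : Type*} [DecidableEq σ] {P : MvPolynomial σ k} {N : ℕ}
    (hP : P.totalDegree ≤ N + 1) (i : σ) : (pderiv i P).totalDegree ≤ N := by
  have hrw : pderiv i P
      = ∑ s ∈ P.support, monomial (s - Finsupp.single i 1) (coeff s P * s i) := by
    conv_lhs => rw [P.as_sum]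
    rw [map_sum]
    simp [pderiv_monomial]
  rw [hrw]
  refine (totalDegree_finset_sum _ _).trans (Finset.sup_le fun s hs => ?_)
  by_cases hc : (coeff s P * (s i : k)) = 0
  · simp [hc]
  · rw [totalDegree_monomial _ hc]
    have hi : s i ≠ 0 := by
      intro h0
      apply hc
      rw [h0]
      simp
    have hle : Finsupp.single i 1 ≤ s := by rw [Finsupp.single_le_iff]; omega
    have hsum : ((s - Finsupp.single i 1).sum fun _ e => e) + 1 = s.sum fun _ e => e := by
      conv_rhs => rw [← tsub_add_cancel_of_le hle]
      rw [Finsupp.sum_add_index' (fun _ => rfl) (fun _ b c => rfl)]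
      rw [Finsupp.sum_single_index rfl]
    have hdeg : (s.sum fun _ e => e) ≤ N + 1 := le_trans (le_totalDegree hs) hP
    omega

/-- Chain rule for `aeval` along a polynomial family. -/
lemma pderiv_aeval (g : Fin m → MvPolynomial (Fin m) k) (l : Fin m)
    (P : MvPolynomial (Fin m) k) :
    pderiv l (aeval g P) = ∑ j, aeval g (pderiv j P) * pderiv l (g j) := by
  induction P using MvPolynomial.induction_on with
  | C a => simp
  | add p q hp hq => simp only [map_add, hp, hq, add_mul, Finset.sum_add_distrib]
  | mul_X p j hp =>
      classical
      have h1 : ∀ i : Fin m, aeval g (pderiv i (X j : MvPolynomial (Fin m) k))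
          = if i = j then 1 else 0 := by
        intro i
        rw [pderiv_X]
        rcases eq_or_ne i j with h | h
        · subst h; simp
        · rw [Pi.single_eq_of_ne (Ne.symm h)]
          simp [h]
      have h2 : ∀ i : Fin m, pderiv i (p * X j)
          = pderiv i p * X j + p * pderiv i (X j) := fun i => pderiv_mul
      rw [map_mul, aeval_X, pderiv_mul, hp]
      simp only [h2, map_add, map_mul, aeval_X, h1, add_mul, Finset.sum_add_distrib]
      congr 1
      · rw [Finset.sum_mul]
        refine Finset.sum_congr rfl fun i _ => by ring
      · rw [Finset.sum_congr rfl (fun i _ => by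
          rw [mul_ite, mul_one, mul_zero, ite_mul, zero_mul])]
        rw [Finset.sum_ite_eq' Finset.univ j (fun i => aeval g p * pderiv l (g i))]
        simp


/-- Polynomials with invertible Jacobian are algebraically independent. -/
lemma algInd_of_jac [CharZero k] (g : Fin m → MvPolynomial (Fin m) k) {c : k} (hc : c ≠ 0)
    (hdet : (Matrix.of fun j l => pderiv l (g j)).det = C c) :
    AlgebraicIndependent k g := by
  classical
  rw [algebraicIndependent_iff]
  intro P hP
  suffices h : ∀ N (P : MvPolynomial (Fin m) k), P.totalDegree ≤ N → aeval g P = 0 → P = 0 from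
    h P.totalDegree P le_rfl hP
  clear hP P
  intro N
  induction N with
  | zero =>
      intro P hdeg h0
      have hpd : ∀ i, pderiv i P = 0 := by
        intro i
        ext t
        rw [coeff_pderiv, coeff_zero]
        have : coeff (t + Finsupp.single i 1) P = 0 := by
          by_contra hcon
          have hmem : t + Finsupp.single i 1 ∈ P.support := Finsupp.mem_support_iff.2 hcon
          have h1 := le_trans (le_totalDegree hmem) hdeg
          have h2 : ((t + Finsupp.single i 1 : _ →₀ ℕ)).sum (fun _ e => e)
              = (t.sum fun _ e => e) + 1 := by
            rw [Finsupp.sum_add_index' (fun _ => rfl) (fun _ b c => rfl),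
              Finsupp.sum_single_index rfl]
          omega
        rw [this, mul_zero]
      have hC := eq_C_of_pderiv_eq_zero hpd
      rw [hC] at h0 ⊢
      rw [aeval_C] at h0
      have : coeff 0 P = 0 := by
        have := (map_eq_zero_iff (algebraMap k (MvPolynomial (Fin m) k))
          (C_injective _ _)).1 h0
        exact this
      rw [this, map_zero]
  | succ N ih =>
      intro P hdeg h0
      set J : Matrix (Fin m) (Fin m) (MvPolynomial (Fin m) k) :=
        Matrix.of fun j l => pderiv l (g j) with hJ
      set v : Fin m → MvPolynomial (Fin m) k := fun j => aeval g (pderiv j P) with hv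
      have hrow : Matrix.vecMul v J = 0 := by
        funext l
        have hch := pderiv_aeval g l P
        rw [h0, map_zero] at hch
        simp only [Matrix.vecMul, dotProduct, hJ, Matrix.of_apply]
        exact hch.symm
      have h2 : Matrix.vecMul v (J * J.adjugate) = 0 := by
        rw [← Matrix.vecMul_vecMul, hrow, Matrix.zero_vecMul]
      rw [Matrix.mul_adjugate, hdet] at h2
      have hvz : ∀ j, v j = 0 := by
        intro j
        have hcj := congrFun h2 j
        have heq : Matrix.vecMul v ((C c : MvPolynomial (Fin m) k) • (1 : Matrix (Fin m) (Fin m) (MvPolynomial (Fin m) k))) j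
            = v j * C c := by
          simp [Matrix.vecMul, dotProduct, Matrix.smul_apply, Matrix.one_apply,
            mul_ite, mul_zero, mul_one, Finset.sum_ite_eq, Finset.sum_ite_eq']
        rw [heq] at hcj
        rcases mul_eq_zero.1 hcj with h | h
        · exact h
        · exact absurd h (by simpa using hc)
      have hpd : ∀ j, pderiv j P = 0 := fun j =>
        ih _ (totalDegree_pderiv_le hdeg j) (hvz j)
      have hC := eq_C_of_pderiv_eq_zero hpd
      rw [hC] at h0 ⊢
      rw [aeval_C] at h0
      have : coeff 0 P = 0 :=
        (map_eq_zero_iff (algebraMap k (MvPolynomial (Fin m) k)) (C_injective _ _)).1 h0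
      rw [this, map_zero]


/-- There is no algebraically independent family of `m + 1` polynomials in
`m` variables. -/
lemma not_algInd_option (h : Option (Fin m) → MvPolynomial (Fin m) k) :
    ¬ AlgebraicIndependent k h := by
  classical
  intro hind
  set D : ℕ := Finset.univ.sup fun j : Option (Fin m) => (h j).totalDegree with hD
  set a : ℕ := (m + 1) * D + 1 with ha
  set q : ℕ := a ^ m with hq
  set d : ℕ := (m + 1) * q * D with hd
  set emb : (Option (Fin m) → Fin (q + 1)) → (Option (Fin m) →₀ ℕ) :=
    fun e => Finsupp.equivFunOnFinite.symm fun j => (e j : ℕ) with hemb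
  have hembinj : Function.Injective emb := by
    intro e1 e2 h12
    have := Finsupp.equivFunOnFinite.symm.injective h12
    funext j
    exact Fin.val_injective (congrFun this j)
  have hinj : Function.Injective
      (aeval h : MvPolynomial (Option (Fin m)) k →ₐ[k] MvPolynomial (Fin m) k) :=
    algebraicIndependent_iff_injective_aeval.mp hind
  set w : (Option (Fin m) → Fin (q + 1)) → MvPolynomial (Fin m) k :=
    ⇑(aeval h : MvPolynomial (Option (Fin m)) k →ₐ[k] MvPolynomial (Fin m) k).toLinearMap
      ∘ ⇑(basisMonomials (Option (Fin m)) k) ∘ emb with hw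
  have hli : LinearIndependent k w :=
    ((basisMonomials (Option (Fin m)) k).linearIndependent.comp emb hembinj).map'
      (aeval h : MvPolynomial (Option (Fin m)) k →ₐ[k] MvPolynomial (Fin m) k).toLinearMap
      (LinearMap.ker_eq_bot.2 hinj)
  have hwprod : ∀ e, w e = ∏ j, h j ^ (e j : ℕ) := by
    intro e
    rw [hw]
    simp only [Function.comp_apply, AlgHom.toLinearMap_apply, coe_basisMonomials]
    simp only [aeval_monomial, map_one, one_mul]
    rw [Finsupp.prod_fintype _ _ (fun j => pow_zero (h j))]
    refine Finset.prod_congr rfl fun j _ => ?_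
    congr 1
  have hdeg : ∀ e, (w e).totalDegree ≤ d := by
    intro e
    rw [hwprod]
    refine le_trans (totalDegree_finset_prod _ _) ?_
    have hcard : Fintype.card (Option (Fin m)) = m + 1 := by simp
    calc ∑ j, (h j ^ (e j : ℕ)).totalDegree
        ≤ ∑ _j : Option (Fin m), q * D := by
          refine Finset.sum_le_sum fun j _ => ?_
          refine le_trans (totalDegree_pow _ _) ?_
          exact Nat.mul_le_mul (Nat.lt_succ_iff.1 (e j).isLt)
            (Finset.le_sup (f := fun j : Option (Fin m) => (h j).totalDegree)
              (Finset.mem_univ j))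
      _ = (m + 1) * (q * D) := by rw [Finset.sum_const, Finset.card_univ, hcard, smul_eq_mul]
      _ = d := by rw [hd, Nat.mul_assoc]
  set W : (Option (Fin m) → Fin (q + 1)) → restrictDegree (Fin m) k d := fun e =>
    ⟨w e, restrictTotalDegree_le_restrictDegree (σ := Fin m) (R := k) d
      ((mem_restrictTotalDegree _ _ (w e)).2 (hdeg e))⟩ with hW'
  have hliW : LinearIndependent k W := by
    have : w = (restrictDegree (Fin m) k d).subtype ∘ W := rfl
    rw [this] at hli
    exact LinearIndependent.of_comp _ hli
  have hcardE : Fintype.card (Option (Fin m) → Fin (q + 1)) ≤ Module.finrank k (restrictDegree (Fin m) k d) :=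
    hliW.fintype_card_le_finrank
  -- compute / bound both sides
  have hE : Fintype.card (Option (Fin m) → Fin (q + 1)) = (q + 1) ^ (m + 1) := by
    rw [Fintype.card_fun]
    simp
  have hfin : Module.finrank k (restrictDegree (Fin m) k d) ≤ (d + 1) ^ m := by
    set s : Set (Fin m →₀ ℕ) := {n | ∀ i, n i ≤ d} with hs
    set F : s → (Fin m → Fin (d + 1)) := fun n i => ⟨n.1 i, Nat.lt_succ_of_le (n.2 i)⟩ with hF
    have hFinj : Function.Injective F := by
      intro x y hxy
      refine Subtype.ext (Finsupp.ext fun i => ?_)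
      exact congrArg Fin.val (congrFun hxy i)
    have hsfin : Finite s := Finite.of_injective F hFinj
    have : Fintype s := Fintype.ofFinite _
    have hbasis : Module.finrank k (restrictDegree (Fin m) k d) = Fintype.card s :=
      Module.finrank_eq_card_basis (basisRestrictSupport k s)
    rw [hbasis]
    calc Fintype.card s ≤ Fintype.card (Fin m → Fin (d + 1)) :=
          Fintype.card_le_of_injective F hFinj
      _ = (d + 1) ^ m := by rw [Fintype.card_fun]; simp
  have hmain : (q + 1) ^ (m + 1) ≤ (d + 1) ^ m := by
    rw [← hE]
    exact hcardE.trans hfin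
  -- numeric contradiction
  have h1 : d + 1 ≤ a * (q + 1) := by
    have h2 : d = (m + 1) * D * q := by rw [hd]; ring
    have h3 : (m + 1) * D ≤ a := by omega
    have h4 : d ≤ a * q := by rw [h2]; exact Nat.mul_le_mul_right q h3
    have h5 : 1 ≤ a := by omega
    calc d + 1 ≤ a * q + a := by omega
      _ = a * (q + 1) := by ring
  have h6 : (d + 1) ^ m ≤ q * (q + 1) ^ m := by
    calc (d + 1) ^ m ≤ (a * (q + 1)) ^ m := Nat.pow_le_pow_left h1 m
      _ = a ^ m * (q + 1) ^ m := by rw [mul_pow]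
      _ = q * (q + 1) ^ m := by rw [hq]
  have h7 : q * (q + 1) ^ m < (q + 1) ^ (m + 1) := by
    rw [pow_succ]
    have hpos : 0 < (q + 1) ^ m := Nat.pow_pos (by omega)
    calc q * (q + 1) ^ m = (q + 1) ^ m * q := by ring
      _ < (q + 1) ^ m * (q + 1) := by nlinarith
  omega

end Statement10Aux

/-- Lemma 2: the conjecture `JC(m,n,k)` (with the conclusion strengthened, via
Nowicki'"'"'s theorem, to algebraic closedness of `k[f₁,…,f_m]`) implies the
Jacobian Conjecture in `m` variables over `k`. -/
theorem statement10 {k : Type*} [Field k] [CharZero k] {m n : ℕ}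
    (hm : 1 ≤ m) (hmn : m ≤ n)
    (H : ∀ f : Fin m → MvPolynomial (Fin n) k,
      (∃ c : k, c ≠ 0 ∧ IsDgcd f (C c)) →
      AlgClosedIn (Algebra.adjoin k (Set.range f))) :
    ∀ g : Fin m → MvPolynomial (Fin m) k,
      (∃ c : k, c ≠ 0 ∧
        Matrix.det (Matrix.of fun j l => pderiv l (g j)) = C c) →
      Algebra.adjoin k (Set.range g) = ⊤ := by
  classical
  rintro g ⟨c, hc, hdet⟩
  set φ : MvPolynomial (Fin m) k →ₐ[k] MvPolynomial (Fin n) k :=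
    MvPolynomial.rename (Fin.castLE hmn) with hφ
  have hφinj : Function.Injective φ := rename_injective _ (Fin.castLE_injective hmn)
  set f : Fin m → MvPolynomial (Fin n) k := fun j => φ (g j) with hf
  have hjac : jacDet f (Fin.castLE hmn) = C c := by
    unfold jacDet
    have hmat : (Matrix.of fun j l => pderiv (Fin.castLE hmn l) (f j))
        = φ.toRingHom.mapMatrix (Matrix.of fun j l => pderiv l (g j)) := by
      refine Matrix.ext fun j l => ?_
      simp only [Matrix.of_apply, RingHom.mapMatrix_apply, Matrix.map_apply, hf, hφ,
        AlgHom.toRingHom_eq_coe, RingHom.coe_coe, AlgHom.coe_toRingHom]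
      exact pderiv_rename (Fin.castLE_injective hmn) l (g j)
    rw [hmat, ← RingHom.map_det, hdet]
    simp [hφ]
  have hdgcd : IsDgcd f (C c) := by
    constructor
    · intro i _
      exact (IsUnit.map (C : k →+* MvPolynomial (Fin n) k)
        (isUnit_iff_ne_zero.2 hc)).dvd
    · intro e he
      have := he (Fin.castLE hmn) (Fin.strictMono_castLE hmn)
      rwa [hjac] at this
  have Acl := H f ⟨c, hc, hdgcd⟩
  have hgind : AlgebraicIndependent k g := Statement10Aux.algInd_of_jac g hc hdet
  have hXmem : ∀ i : Fin m, (X i : MvPolynomial (Fin m) k) ∈ Algebra.adjoin k (Set.range g) := by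
    intro i
    have hfind : AlgebraicIndependent k f := by
      have := hgind.map' (f := φ) hφinj
      exact this
    have hnt : ¬ Transcendental (Algebra.adjoin k (Set.range f)) (φ (X i)) := by
      intro ht
      have hopt := (hfind.option_iff_transcendental (φ (X i))).2 ht
      have hcomp : (fun o : Option (Fin m) => o.elim (φ (X i)) f)
          = φ ∘ (fun o : Option (Fin m) => o.elim (X i) g) := by
        funext o
        cases o <;> rfl
      rw [hcomp] at hopt
      exact Statement10Aux.not_algInd_option _ (AlgebraicIndependent.of_comp φ hopt)
    have halg : IsAlgebraic (Algebra.adjoin k (Set.range f)) (φ (X i)) := not_not.1 hnt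
    have hmem := Acl _ halg
    have hradj : Algebra.adjoin k (Set.range f) = (Algebra.adjoin k (Set.range g)).map φ := by
      rw [AlgHom.map_adjoin]
      congr 1
      exact Set.range_comp (⇑φ) g
    rw [hradj] at hmem
    obtain ⟨y, hy, hyy⟩ := hmem
    have : y = X i := hφinj hyy
    rwa [this] at hy
  rw [eq_top_iff, ← MvPolynomial.adjoin_range_X]
  refine Algebra.adjoin_le ?_
  rintro _ ⟨i, rfl⟩
  exact hXmem i
end

section
/- Let k be a field of characteristic zero and let 1 ≤ m < n with n ≥ 2. Set f_1 = x_1²x_2 and, if m > 1, f_2 = x_3, …, f_m = x_{m+1} in k[x_1,…,x_n]. Then dgcd(f_1,…,f_m) is associated to x_1 (in particular it is not a nonzero element of k), and yet the subalgebra k[f_1,…,f_m] is algebraically closed in k[x_1,…,x_n]. Hence for m < n the condition 'dgcd(f_1,…,f_m) ∈ k∖{0}' is not necessary for k[f_1,…,f_m] to be algebraically closed in k[x_1,…,x_n]. -/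
open MvPolynomial

set_option linter.unusedVariables false
set_option linter.unusedSectionVars false

section PrimeX
variable {K : Type*} [Field K] {σ : Type*}

private noncomputable def killX (i : σ) : MvPolynomial σ K →ₐ[K] MvPolynomial σ K := by
  classical exact aeval (Function.update X i 0)

lemma killX_X_self (i : σ) : killX (K := K) i (X i) = 0 := by
  classical simp [killX]

lemma X_dvd_sub_killX (i : σ) (p : MvPolynomial σ K) : X i ∣ p - killX i p := by
  classical
  induction p using MvPolynomial.induction_on with
  | C c => simp [killX]
  | add p q hp hq =>
      have : p + q - killX i (p + q) = (p - killX i p) + (q - killX i q) := by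
        rw [map_add]; ring
      rw [this]; exact dvd_add hp hq
  | mul_X p j hp =>
      rcases eq_or_ne j i with rfl | hji
      · have : p * X j - killX j (p * X j) = p * X j - killX j p * 0 := by
          rw [map_mul, killX_X_self]
        rw [this, mul_zero, sub_zero]; exact Dvd.intro_left p rfl
      · have : killX i (p * X j) = killX i p * X j := by
          simp [killX, Function.update_of_ne hji]
        rw [this, ← sub_mul]
        exact Dvd.dvd.mul_right hp _

lemma X_dvd_iff_killX {i : σ} {p : MvPolynomial σ K} : X i ∣ p ↔ killX i p = 0 := by
  constructor
  · rintro ⟨r, rfl⟩; rw [map_mul, killX_X_self, zero_mul]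
  · intro h
    have := X_dvd_sub_killX (K := K) i p
    rwa [h, sub_zero] at this

lemma prime_X' (i : σ) : Prime (X i : MvPolynomial σ K) := by
  refine ⟨X_ne_zero i, ?_, ?_⟩
  · intro h
    have : (X i : MvPolynomial σ K) ∣ 1 := h.dvd
    rw [X_dvd_iff_killX, map_one] at this
    exact one_ne_zero this
  · intro a b hab
    rw [X_dvd_iff_killX, map_mul] at hab
    rcases mul_eq_zero.1 hab with h | h
    · exact Or.inl (X_dvd_iff_killX.2 h)
    · exact Or.inr (X_dvd_iff_killX.2 h)

end PrimeX

section DerivKer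
variable {k A : Type*} [Field k] [CommRing A] [IsDomain A] [CharZero A] [Algebra k A]
variable (R : Subalgebra k A) (D : Derivation k A A)

lemma subalg_nzsmul : NoZeroSMulDivisors ℕ R := by
  constructor
  intro c x h
  rw [nsmul_eq_mul] at h
  rcases mul_eq_zero.1 h with h | h
  · exact Or.inl (by exact_mod_cast h)
  · exact Or.inr h

omit [IsDomain A] [CharZero A] in
lemma coeff_zero_of_aeval_C {c : R} (h : algebraMap R A c = 0) : c = 0 := by
  have : (c : A) = 0 := h
  exact_mod_cast this

lemma D_aeval_eq (hR : ∀ r ∈ R, D r = 0) (a : A) (p : Polynomial R) :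
    D (Polynomial.aeval a p) = Polynomial.aeval a (Polynomial.derivative p) * D a := by
  induction p using Polynomial.induction_on' with
  | add p q hp hq =>
      rw [map_add, D.map_add, hp, hq, Polynomial.derivative_add,
        map_add, add_mul]
  | monomial n c =>
      rw [Polynomial.aeval_monomial, Polynomial.derivative_monomial, Polynomial.aeval_monomial]
      have hc : D (algebraMap R A c) = 0 := hR _ c.2
      rw [D.leibniz, hc, smul_zero, add_zero, D.leibniz_pow, map_mul]
      have hn : (algebraMap R A) (↑n : R) = (n : A) := by push_cast; ring
      rw [hn]
      simp only [smul_eq_mul, nsmul_eq_mul]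
      ring

lemma deriv_zero_of_isAlgebraic (hR : ∀ r ∈ R, D r = 0) {a : A}
    (ha : IsAlgebraic R a) : D a = 0 := by
  haveI := subalg_nzsmul R
  obtain ⟨p, hp0, hpa⟩ := ha
  have key : ∀ d : ℕ, ∀ p : Polynomial R, p ≠ 0 → Polynomial.aeval a p = 0 →
      p.natDegree ≤ d → D a = 0 := by
    intro d
    induction d with
    | zero =>
        intro p hp0 hpa hdeg
        have h0 : p.natDegree = 0 := Nat.le_zero.1 hdeg
        have hC := Polynomial.eq_C_of_natDegree_eq_zero h0
        rw [hC, Polynomial.aeval_C] at hpa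
        exact absurd (by rw [hC, coeff_zero_of_aeval_C R hpa, map_zero]) hp0
    | succ d ih =>
        intro p hp0 hpa hdeg
        by_cases h0 : p.natDegree = 0
        · have hC := Polynomial.eq_C_of_natDegree_eq_zero h0
          rw [hC, Polynomial.aeval_C] at hpa
          exact absurd (by rw [hC, coeff_zero_of_aeval_C R hpa, map_zero]) hp0
        · have hder := D_aeval_eq R D hR a p
          rw [hpa, map_zero] at hder
          rcases mul_eq_zero.1 hder.symm with h | h
          · have hd0 : Polynomial.derivative p ≠ 0 := fun hz =>
              h0 (Polynomial.natDegree_eq_zero_of_derivative_eq_zero hz)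
            exact ih _ hd0 h (by
              have := Polynomial.natDegree_derivative_lt h0
              omega)
          · exact h
  exact key p.natDegree p hp0 hpa le_rfl
end DerivKer

section CoeffEuler
variable {K : Type*} [Field K] {σ : Type*}

lemma X_mul_pderiv_monomial [DecidableEq σ] (i : σ) (s : σ →₀ ℕ) (c : K) :
    X i * pderiv i (monomial s c) = monomial s (c * s i) := by
  rw [pderiv_monomial]
  rcases eq_or_ne (s i) 0 with h | h
  · rw [h]; simp
  · rw [X, monomial_mul, one_mul,
      add_tsub_cancel_of_le (Finsupp.single_le_iff.mpr (Nat.one_le_iff_ne_zero.2 h))]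

lemma coeff_X_mul_pderiv [DecidableEq σ] (i : σ) (p : MvPolynomial σ K) (ν : σ →₀ ℕ) :
    coeff ν (X i * pderiv i p) = (ν i : K) * coeff ν p := by
  induction p using MvPolynomial.induction_on' with
  | monomial s c =>
      rw [_root_.X_mul_pderiv_monomial, coeff_monomial, coeff_monomial]
      split_ifs with h
      · subst h; ring
      · ring
  | add p q hp hq =>
      rw [map_add, mul_add, coeff_add, coeff_add, hp, hq, mul_add]

lemma support_cond_of_X_mul_pderiv_eq_zero [DecidableEq σ] {i : σ} {p : MvPolynomial σ K}
    [CharZero K] (h : X i * pderiv i p = 0) {μ : σ →₀ ℕ} (hμ : μ ∈ p.support) : μ i = 0 := by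
  by_contra hne
  have := coeff_X_mul_pderiv i p μ
  rw [h, coeff_zero] at this
  have hc : coeff μ p ≠ 0 := mem_support_iff.1 hμ
  have : (μ i : K) = 0 := by
    rcases mul_eq_zero.1 this.symm with h' | h'
    · exact h'
    · exact absurd h' hc
  exact hne (by exact_mod_cast this)

end CoeffEuler

section Construct
variable {k : Type*} [Field k] {m n : ℕ}

lemma prod_monomial_one {σ α : Type*} (t : Finset α) (g : α → (σ →₀ ℕ)) :
    (∏ j ∈ t, (monomial (g j) (1 : k))) = monomial (∑ j ∈ t, g j) 1 := by
  classical
  induction t using Finset.cons_induction with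
  | empty => simp
  | cons a t ha ih => rw [Finset.prod_cons, Finset.sum_cons, ih, monomial_mul, one_mul]

/-- exponent vectors of the generators -/
noncomputable def Evec (hm : 1 ≤ m) (hmn : m < n) (j : Fin m) : Fin n →₀ ℕ :=
  if (j : ℕ) = 0 then
    Finsupp.single (⟨0, by omega⟩ : Fin n) 2 + Finsupp.single (⟨1, by omega⟩ : Fin n) 1
  else Finsupp.single (Fin.castLE hmn j.succ) 1

lemma Evec_apply (hm : 1 ≤ m) (hmn : m < n) (j : Fin m) (i : Fin n) :
    Evec hm hmn j i = if (j : ℕ) = 0 then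
      (if (i : ℕ) = 0 then 2 else 0) + (if (i : ℕ) = 1 then 1 else 0)
    else (if (i : ℕ) = (j : ℕ) + 1 then 1 else 0) := by
  rw [Evec]
  split_ifs with h h1 h2 h3 h4 <;>
    simp_all [Finsupp.single_apply, Fin.ext_iff] <;> omega

lemma f_eq_monomial (hm : 1 ≤ m) (hmn : m < n) (f : Fin m → MvPolynomial (Fin n) k)
    (hf : f = fun j : Fin m => if (j : ℕ) = 0
      then X (⟨0, by omega⟩ : Fin n) ^ 2 * X (⟨1, by omega⟩ : Fin n)
      else X (Fin.castLE hmn j.succ)) (j : Fin m) :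
    f j = monomial (Evec hm hmn j) 1 := by
  subst hf
  by_cases h : (j : ℕ) = 0
  · simp only [h, if_true, Evec]
    rw [X_pow_eq_monomial, X, monomial_mul, mul_one]
  · simp only [h, if_false, Evec, X]

/-- pullback exponent -/
noncomputable def preExp (hm : 1 ≤ m) (hmn : m < n) (μ : Fin n →₀ ℕ) : Fin m →₀ ℕ :=
  Finsupp.equivFunOnFinite.symm (fun j : Fin m =>
    if (j : ℕ) = 0 then μ ⟨1, by omega⟩ else μ ⟨(j : ℕ) + 1, by omega⟩)

lemma preExp_apply (hm : 1 ≤ m) (hmn : m < n) (μ : Fin n →₀ ℕ) (j : Fin m) :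
    preExp hm hmn μ j = if (j : ℕ) = 0 then μ ⟨1, by omega⟩ else μ ⟨(j : ℕ) + 1, by omega⟩ := rfl

lemma sum_preExp (hm : 1 ≤ m) (hmn : m < n) (μ : Fin n →₀ ℕ)
    (h0 : μ ⟨0, by omega⟩ = 2 * μ ⟨1, by omega⟩)
    (hbig : ∀ j : Fin n, m + 1 ≤ (j : ℕ) → μ j = 0) :
    (∑ j : Fin m, preExp hm hmn μ j • Evec hm hmn j) = μ := by
  ext i
  rw [Finsupp.finset_sum_apply]
  simp only [Finsupp.smul_apply, smul_eq_mul, Evec_apply, preExp_apply]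
  rcases Nat.lt_or_ge (i : ℕ) 2 with hi2 | hi2
  · -- i = 0 or 1 : only j = 0 contributes
    rw [Finset.sum_eq_single (⟨0, by omega⟩ : Fin m)]
    · have hj0 : ((⟨0, by omega⟩ : Fin m) : ℕ) = 0 := rfl
      rw [if_pos hj0, if_pos hj0]
      rcases Nat.lt_or_ge (i : ℕ) 1 with hi1 | hi1
      · have hiv : (i : ℕ) = 0 := by omega
        have hieq : i = ⟨0, by omega⟩ := Fin.ext hiv
        rw [if_pos hiv, if_neg (show ¬(i : ℕ) = 1 by omega), hieq, h0]; ring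
      · have hiv : (i : ℕ) = 1 := by omega
        have hieq : i = ⟨1, by omega⟩ := Fin.ext hiv
        rw [if_neg (show ¬(i : ℕ) = 0 by omega), if_pos hiv, hieq]; ring
    · intro j _ hj
      have hjv : ¬(j : ℕ) = 0 := fun h => hj (Fin.ext h)
      rw [if_neg hjv, if_neg hjv, if_neg (show ¬(i : ℕ) = (j : ℕ) + 1 by omega), mul_zero]
    · intro h; exact absurd (Finset.mem_univ _) h
  · rcases Nat.lt_or_ge (i : ℕ) (m + 1) with him | him
    · -- 2 ≤ i ≤ m : only j = i - 1 contributes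
      have hmem : ((i : ℕ) - 1) < m := by omega
      rw [Finset.sum_eq_single (⟨(i : ℕ) - 1, hmem⟩ : Fin m)]
      · have hjv : ¬((⟨(i : ℕ) - 1, hmem⟩ : Fin m) : ℕ) = 0 := by
          simp only [Fin.val_mk]; omega
        rw [if_neg hjv, if_neg hjv,
          if_pos (show (i : ℕ) = ((⟨(i : ℕ) - 1, hmem⟩ : Fin m) : ℕ) + 1 by
            simp only [Fin.val_mk]; omega), mul_one]
        congr 1
        exact Fin.ext (by simp only [Fin.val_mk]; omega)
      · intro j _ hj
        by_cases hjv : (j : ℕ) = 0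
        · rw [if_pos hjv, if_pos hjv, if_neg (show ¬(i : ℕ) = 0 by omega),
            if_neg (show ¬(i : ℕ) = 1 by omega)]; ring
        · rw [if_neg hjv, if_neg hjv, if_neg, mul_zero]
          intro hh
          exact hj (Fin.ext (by simp only [Fin.val_mk]; omega))
      · intro h; exact absurd (Finset.mem_univ _) h
    · -- i ≥ m + 1 : nothing contributes, and μ i = 0
      rw [hbig i him, Finset.sum_eq_zero]
      intro j _
      by_cases hjv : (j : ℕ) = 0
      · rw [if_pos hjv, if_pos hjv, if_neg (show ¬(i : ℕ) = 0 by omega),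
          if_neg (show ¬(i : ℕ) = 1 by omega)]; ring
      · have : ¬(i : ℕ) = (j : ℕ) + 1 := by have := j.isLt; omega
        rw [if_neg hjv, if_neg hjv, if_neg this, mul_zero]

lemma mem_range_of_good (hm : 1 ≤ m) (hmn : m < n) (f : Fin m → MvPolynomial (Fin n) k)
    (hf : f = fun j : Fin m => if (j : ℕ) = 0
      then X (⟨0, by omega⟩ : Fin n) ^ 2 * X (⟨1, by omega⟩ : Fin n)
      else X (Fin.castLE hmn j.succ))
    (a : MvPolynomial (Fin n) k)
    (hgood : ∀ μ ∈ a.support, μ ⟨0, by omega⟩ = 2 * μ ⟨1, by omega⟩ ∧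
      ∀ j : Fin n, m + 1 ≤ (j : ℕ) → μ j = 0) :
    a ∈ (aeval f : MvPolynomial (Fin m) k →ₐ[k] MvPolynomial (Fin n) k).range := by
  refine ⟨∑ μ ∈ a.support, monomial (preExp hm hmn μ) (coeff μ a), ?_⟩
  have step : ∀ μ ∈ a.support, aeval f (monomial (preExp hm hmn μ) (coeff μ a))
      = monomial μ (coeff μ a) := by
    intro μ hμ
    obtain ⟨h0, hbig⟩ := hgood μ hμ
    rw [aeval_monomial]
    have hfp : ∀ j : Fin m, f j ^ (preExp hm hmn μ j)
        = monomial ((preExp hm hmn μ j) • Evec hm hmn j) 1 := by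
      intro j
      rw [f_eq_monomial hm hmn f hf j, monomial_pow, one_pow]
    rw [Finsupp.prod_fintype _ _ (fun j => pow_zero (f j))]
    simp_rw [hfp]
    rw [prod_monomial_one, sum_preExp hm hmn μ h0 hbig, algebraMap_eq, C_mul_monomial, mul_one]
  calc (aeval f) (∑ μ ∈ a.support, monomial (preExp hm hmn μ) (coeff μ a))
      = ∑ μ ∈ a.support, aeval f (monomial (preExp hm hmn μ) (coeff μ a)) := map_sum _ _ _
    _ = ∑ μ ∈ a.support, monomial μ (coeff μ a) := Finset.sum_congr rfl step
    _ = a := support_sum_monomial_coeff a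

end Construct

section Det
variable {k : Type*} [Field k] {n : ℕ}

lemma pderiv_f0 (hn : 2 ≤ n) (v : Fin n) :
    pderiv v (X (⟨0, by omega⟩ : Fin n) ^ 2 * X (⟨1, by omega⟩ : Fin n) : MvPolynomial (Fin n) k) =
      if (v : ℕ) = 0 then C 2 * X (⟨0, by omega⟩ : Fin n) * X (⟨1, by omega⟩ : Fin n)
      else if (v : ℕ) = 1 then X (⟨0, by omega⟩ : Fin n) ^ 2 else 0 := by
  classical
  rw [pderiv_mul, pderiv_pow, pderiv_X, pderiv_X]
  simp only [Pi.single_apply, Fin.ext_iff, Fin.val_mk]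
  split_ifs <;> first
    | omega
    | (push_cast [C_eq_coe_nat, map_ofNat]; ring)

variable {m' : ℕ}

lemma X0_dvd_pderiv_f0 (hn : 2 ≤ n) (v : Fin n) :
    X (⟨0, by omega⟩ : Fin n) ∣
      pderiv v (X (⟨0, by omega⟩ : Fin n) ^ 2 * X (⟨1, by omega⟩ : Fin n) : MvPolynomial (Fin n) k) := by
  rw [pderiv_f0 hn v]
  split_ifs
  · exact Dvd.dvd.mul_right (Dvd.intro_left _ rfl) _
  · exact dvd_pow_self _ two_ne_zero
  · exact dvd_zero _

lemma X0_dvd_jacDet (hm : 1 ≤ m'+1) (hmn : m' + 1 < n) (hn : 2 ≤ n)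
    (f : Fin (m'+1) → MvPolynomial (Fin n) k)
    (hf : f = fun j : Fin (m'+1) => if (j : ℕ) = 0
      then X (⟨0, by omega⟩ : Fin n) ^ 2 * X (⟨1, by omega⟩ : Fin n)
      else X (Fin.castLE hmn j.succ))
    (i : Fin (m'+1) → Fin n) :
    X (⟨0, by omega⟩ : Fin n) ∣ jacDet f i := by
  rw [jacDet, Matrix.det_succ_row_zero]
  refine Finset.dvd_sum fun l _ => ?_
  have h00 : (Matrix.of fun j l => pderiv (i l) (f j)) 0 l = pderiv (i l) (f 0) := rfl
  have hf0 : f 0 = X (⟨0, by omega⟩ : Fin n) ^ 2 * X (⟨1, by omega⟩ : Fin n) := by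
    rw [hf]; rfl
  rw [h00, hf0]
  exact ((X0_dvd_pderiv_f0 hn (i l)).mul_left _).mul_right _

end Det

section Diag
variable {k : Type*} [Field k] {n m' : ℕ}

lemma jacDet_ib (hmn : m' + 1 < n) (hn : 2 ≤ n)
    (f : Fin (m'+1) → MvPolynomial (Fin n) k)
    (hf : f = fun j : Fin (m'+1) => if (j : ℕ) = 0
      then X (⟨0, by omega⟩ : Fin n) ^ 2 * X (⟨1, by omega⟩ : Fin n)
      else X (Fin.castLE hmn j.succ)) :
    jacDet f (fun l : Fin (m'+1) => (⟨(l : ℕ) + 1, by omega⟩ : Fin n)) =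
      X (⟨0, by omega⟩ : Fin n) ^ 2 := by
  classical
  rw [jacDet]
  refine (congrArg Matrix.det (?_ : _ = Matrix.diagonal (fun j : Fin (m'+1) =>
      if (j : ℕ) = 0 then X (⟨0, by omega⟩ : Fin n) ^ 2
      else (1 : MvPolynomial (Fin n) k)))).trans ?_
  · refine Matrix.ext fun j l => ?_
    rw [Matrix.of_apply, Matrix.diagonal_apply, hf]
    dsimp only
    by_cases hj : (j : ℕ) = 0
    · rw [if_pos hj, pderiv_f0 hn, if_neg (show ¬((l : ℕ) + 1 = 0) by omega)]
      by_cases hjl : j = l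
      · rw [if_pos hjl, if_pos (show (((⟨(l : ℕ) + 1, by omega⟩ : Fin n)) : ℕ) = 1 by
          simp only [Fin.val_mk]; omega), if_pos hj]
      · rw [if_neg hjl, if_neg (show ¬(((⟨(l : ℕ) + 1, by omega⟩ : Fin n)) : ℕ) = 1 by
          simp only [Fin.val_mk]
          intro hc
          exact hjl (Fin.ext (by omega)))]
    · rw [if_neg hj, pderiv_X, Pi.single_apply]
      by_cases hjl : j = l
      · rw [if_pos (show Fin.castLE hmn j.succ = ⟨(l : ℕ) + 1, by omega⟩ from
          Fin.ext (by simp [Fin.castLE, hjl])), if_pos hjl, if_neg hj]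
      · rw [if_neg (fun hc => hjl (Fin.ext (by
            have := congrArg Fin.val hc
            simp [Fin.castLE] at this
            omega))), if_neg hjl]
  · rw [Matrix.det_diagonal, Fin.prod_univ_succ,
      if_pos (show (((0 : Fin (m'+1))) : ℕ) = 0 by simp)]
    have h1 : ∀ j : Fin m', (if ((j.succ : Fin (m'+1)) : ℕ) = 0
        then X (⟨0, by omega⟩ : Fin n) ^ 2 else (1 : MvPolynomial (Fin n) k)) = 1 := by
      intro j
      rw [if_neg (by simp)]
    simp only [h1, Finset.prod_const_one, mul_one]

lemma jacDet_ia (hmn : m' + 1 < n) (hn : 2 ≤ n)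
    (f : Fin (m'+1) → MvPolynomial (Fin n) k)
    (hf : f = fun j : Fin (m'+1) => if (j : ℕ) = 0
      then X (⟨0, by omega⟩ : Fin n) ^ 2 * X (⟨1, by omega⟩ : Fin n)
      else X (Fin.castLE hmn j.succ)) :
    jacDet f (fun l : Fin (m'+1) => if (l : ℕ) = 0 then (⟨0, by omega⟩ : Fin n)
        else (⟨(l : ℕ) + 1, by omega⟩ : Fin n)) =
      C 2 * X (⟨0, by omega⟩ : Fin n) * X (⟨1, by omega⟩ : Fin n) := by
  classical
  rw [jacDet]
  refine (congrArg Matrix.det (?_ : _ = Matrix.diagonal (fun j : Fin (m'+1) =>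
      if (j : ℕ) = 0 then C 2 * X (⟨0, by omega⟩ : Fin n) * X (⟨1, by omega⟩ : Fin n)
      else (1 : MvPolynomial (Fin n) k)))).trans ?_
  · refine Matrix.ext fun j l => ?_
    rw [Matrix.of_apply, Matrix.diagonal_apply, hf]
    dsimp only
    by_cases hl : (l : ℕ) = 0
    · rw [if_pos hl]
      by_cases hj : (j : ℕ) = 0
      · rw [if_pos hj, pderiv_f0 hn, if_pos rfl,
          if_pos (show j = l from Fin.ext (by omega)), if_pos hj]
      · rw [if_neg hj, if_neg (show ¬j = l from fun hc => hj (by rw [hc]; exact hl)),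
          pderiv_X, Pi.single_apply,
          if_neg (fun hc => by
            have := congrArg Fin.val hc
            simp [Fin.castLE] at this)]
    · rw [if_neg hl]
      by_cases hj : (j : ℕ) = 0
      · rw [if_pos hj, pderiv_f0 hn,
          if_neg (show ¬((l : ℕ) + 1 = 0) by omega),
          if_neg (show ¬((l : ℕ) + 1 = 1) by omega),
          if_neg (show ¬j = l from fun hc => hl (by rw [← hc]; exact hj))]
      · rw [if_neg hj, pderiv_X, Pi.single_apply]
        by_cases hjl : j = l
        · rw [if_pos (show Fin.castLE hmn j.succ = ⟨(l : ℕ) + 1, by omega⟩ from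
            Fin.ext (by simp [Fin.castLE, hjl])), if_pos hjl, if_neg hj]
        · rw [if_neg (fun hc => hjl (Fin.ext (by
              have := congrArg Fin.val hc
              simp [Fin.castLE] at this
              omega))), if_neg hjl]
  · rw [Matrix.det_diagonal, Fin.prod_univ_succ,
      if_pos (show (((0 : Fin (m'+1))) : ℕ) = 0 by simp)]
    have h1 : ∀ j : Fin m', (if ((j.succ : Fin (m'+1)) : ℕ) = 0
        then C (2:k) * X (⟨0, by omega⟩ : Fin n) * X (⟨1, by omega⟩ : Fin n)
        else (1 : MvPolynomial (Fin n) k)) = 1 := by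
      intro j
      rw [if_neg (by simp)]
    simp only [h1, Finset.prod_const_one, mul_one]

end Diag

noncomputable def D1' {k : Type*} [Field k] {n : ℕ} (x0 x1 : Fin n) :
    Derivation k (MvPolynomial (Fin n) k) (MvPolynomial (Fin n) k) :=
  (X x0 : MvPolynomial (Fin n) k) • (pderiv x0 : Derivation k (MvPolynomial (Fin n) k) (MvPolynomial (Fin n) k))
    - (C 2 * X x1 : MvPolynomial (Fin n) k) • (pderiv x1 : Derivation k (MvPolynomial (Fin n) k) (MvPolynomial (Fin n) k))
lemma D1'_apply {k : Type*} [Field k] {n : ℕ} (x0 x1 : Fin n) (a : MvPolynomial (Fin n) k) :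
    D1' x0 x1 a = X x0 * pderiv x0 a - C 2 * (X x1 * pderiv x1 a) := by
  simp [D1']; ring
lemma D_zero_on_adjoin {k : Type*} [Field k] {n : ℕ} (D : Derivation k (MvPolynomial (Fin n) k) (MvPolynomial (Fin n) k))
    (S : Set (MvPolynomial (Fin n) k)) (hS : ∀ s ∈ S, D s = 0) :
    ∀ x ∈ Algebra.adjoin k S, D x = 0 := by
  intro x hx
  induction hx using Algebra.adjoin_induction with
  | mem x hx => exact hS x hx
  | algebraMap r => exact D.map_algebraMap r
  | add x y hx hy ihx ihy => rw [map_add, ihx, ihy, add_zero]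
  | mul x y hx hy ihx ihy => rw [D.leibniz, ihx, ihy, smul_zero, smul_zero, add_zero]

/-- Remark 1: for `1 ≤ m < n` (so `n ≥ 2`), the polynomials `f₁ = x₁²x₂`,
`f₂ = x₃`, …, `f_m = x_{m+1}` have `dgcd(f₁,…,f_m)` associated to `x₁`
(indeed `x₁` itself is a dgcd, and no constant is), yet `k[f₁,…,f_m]` is
algebraically closed in `k[x₁,…,xₙ]`. -/
theorem statement11 {k : Type*} [Field k] [CharZero k] {m n : ℕ}
    (hm : 1 ≤ m) (hmn : m < n) (hn : 2 ≤ n)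
    (f : Fin m → MvPolynomial (Fin n) k)
    (hf : f = fun j : Fin m => if (j : ℕ) = 0
      then X (⟨0, by omega⟩ : Fin n) ^ 2 * X (⟨1, by omega⟩ : Fin n)
      else X (Fin.castLE hmn j.succ)) :
    IsDgcd f (X (⟨0, by omega⟩ : Fin n)) ∧
    (∀ c : k, ¬ IsDgcd f (C c)) ∧
    AlgClosedIn (Algebra.adjoin k (Set.range f)) := by
  obtain ⟨m', rfl⟩ : ∃ m', m = m' + 1 := ⟨m - 1, by omega⟩
  classical
  have ibmono : StrictMono (fun l : Fin (m'+1) => (⟨(l : ℕ) + 1, by omega⟩ : Fin n)) := by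
    intro a b hab
    have h : (a : ℕ) < b := hab
    exact Fin.mk_lt_mk.2 (by omega)
  have iamono : StrictMono (fun l : Fin (m'+1) =>
      if (l : ℕ) = 0 then (⟨0, by omega⟩ : Fin n) else (⟨(l : ℕ) + 1, by omega⟩ : Fin n)) := by
    intro a b hab
    have h : (a : ℕ) < b := hab
    dsimp only
    by_cases ha0 : (a : ℕ) = 0
    · rw [if_pos ha0, if_neg (show ¬(b : ℕ) = 0 by omega)]
      exact Fin.mk_lt_mk.2 (by omega)
    · rw [if_neg ha0, if_neg (show ¬(b : ℕ) = 0 by omega)]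
      exact Fin.mk_lt_mk.2 (by omega)
  have hdvd1 : ∀ i : Fin (m'+1) → Fin n, StrictMono i →
      X (⟨0, by omega⟩ : Fin n) ∣ jacDet f i :=
    fun i _ => X0_dvd_jacDet hm hmn hn f hf i
  have part1 : IsDgcd f (X (⟨0, by omega⟩ : Fin n)) := by
    refine ⟨hdvd1, ?_⟩
    intro e he
    have hb := he _ ibmono
    rw [jacDet_ib hmn hn f hf] at hb
    have ha := he _ iamono
    rw [jacDet_ia hmn hn f hf] at ha
    have h2 : IsUnit (C (2:k) : MvPolynomial (Fin n) k) :=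
      (isUnit_iff_ne_zero.2 two_ne_zero).map C
    rw [mul_assoc, h2.dvd_mul_left] at ha
    obtain ⟨i, hi2, hassoc⟩ := (dvd_prime_pow (prime_X' (⟨0, by omega⟩ : Fin n)) 2).1 hb
    interval_cases i
    · have hu : IsUnit e := associated_one_iff_isUnit.1 (by rwa [pow_zero] at hassoc)
      exact hu.dvd.trans (one_dvd _)
    · rw [pow_one] at hassoc
      exact hassoc.dvd
    · exfalso
      have hXe : (X (⟨0, by omega⟩ : Fin n) : MvPolynomial (Fin n) k) ^ 2 ∣
          X (⟨0, by omega⟩ : Fin n) * X (⟨1, by omega⟩ : Fin n) :=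
        dvd_trans hassoc.symm.dvd ha
      rw [sq] at hXe
      have h01 := X_dvd_X.1 ((mul_dvd_mul_iff_left (X_ne_zero
        (⟨0, by omega⟩ : Fin n) : (X (⟨0, by omega⟩ : Fin n) : MvPolynomial (Fin n) k) ≠ 0)).1 hXe)
      have := congrArg Fin.val h01
      simp at this
  refine ⟨part1, ?_, ?_⟩
  · rintro c ⟨h1, h2⟩
    have hXc : X (⟨0, by omega⟩ : Fin n) ∣ (C c : MvPolynomial (Fin n) k) := h2 _ hdvd1
    by_cases hc : c = 0
    · subst hc
      have h := h1 _ ibmono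
      rw [jacDet_ib hmn hn f hf, map_zero, zero_dvd_iff] at h
      exact pow_ne_zero 2 (X_ne_zero _) h
    · have hu : IsUnit (C c : MvPolynomial (Fin n) k) := (isUnit_iff_ne_zero.2 hc).map C
      exact (prime_X' _).not_unit (isUnit_of_dvd_unit hXc hu)
  · intro a ha
    have hgen1 : ∀ s ∈ Set.range f,
        D1' (⟨0, by omega⟩ : Fin n) (⟨1, by omega⟩ : Fin n) s = 0 := by
      rintro s ⟨j, rfl⟩
      rw [D1'_apply, hf]
      dsimp only
      by_cases hj : (j : ℕ) = 0
      · rw [if_pos hj, pderiv_f0 hn, pderiv_f0 hn,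
          if_pos (show ((⟨0, by omega⟩ : Fin n) : ℕ) = 0 from rfl),
          if_neg (show ¬((⟨1, by omega⟩ : Fin n) : ℕ) = 0 from by simp),
          if_pos (show ((⟨1, by omega⟩ : Fin n) : ℕ) = 1 from rfl)]
        ring
      · rw [if_neg hj,
          pderiv_X_of_ne (show Fin.castLE hmn j.succ ≠ (⟨0, by omega⟩ : Fin n) from fun hc => by
            have := congrArg Fin.val hc
            simp [Fin.castLE] at this),
          pderiv_X_of_ne (show Fin.castLE hmn j.succ ≠ (⟨1, by omega⟩ : Fin n) from fun hc => by
            have := congrArg Fin.val hc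
            simp [Fin.castLE] at this
            exact hj (by simp [this]))]
        simp
    have hgen2 : ∀ j : Fin n, m' + 1 + 1 ≤ (j : ℕ) → ∀ s ∈ Set.range f, pderiv j s = 0 := by
      rintro j hj s ⟨l, rfl⟩
      rw [hf]
      dsimp only
      by_cases hl : (l : ℕ) = 0
      · rw [if_pos hl, pderiv_f0 hn, if_neg (show ¬(j : ℕ) = 0 by omega),
          if_neg (show ¬(j : ℕ) = 1 by omega)]
      · rw [if_neg hl]
        exact pderiv_X_of_ne (fun hc => by
          have := congrArg Fin.val hc
          simp [Fin.castLE] at this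
          omega)
    have hD1 : D1' (⟨0, by omega⟩ : Fin n) (⟨1, by omega⟩ : Fin n) a = 0 :=
      deriv_zero_of_isAlgebraic _ _
        (fun r hr => D_zero_on_adjoin _ _ hgen1 r hr) ha
    have hPj : ∀ j : Fin n, m' + 1 + 1 ≤ (j : ℕ) → pderiv j a = 0 := fun j hj =>
      deriv_zero_of_isAlgebraic _ _
        (fun r hr => D_zero_on_adjoin _ _ (hgen2 j hj) r hr) ha
    have hgood : ∀ μ ∈ a.support, μ ⟨0, by omega⟩ = 2 * μ ⟨1, by omega⟩ ∧
        ∀ j : Fin n, m' + 1 + 1 ≤ (j : ℕ) → μ j = 0 := by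
      intro μ hμ
      constructor
      · have h0 := congrArg (coeff μ) hD1
        rw [D1'_apply, coeff_zero, coeff_sub, coeff_C_mul, coeff_X_mul_pderiv,
          coeff_X_mul_pderiv, sub_eq_zero] at h0
        have hc : coeff μ a ≠ 0 := mem_support_iff.1 hμ
        have h0' : ((μ ⟨0, by omega⟩ : ℕ) : k) * coeff μ a
            = ((2 * μ ⟨1, by omega⟩ : ℕ) : k) * coeff μ a := by
          rw [h0]; push_cast; ring
        have := mul_right_cancel₀ hc h0'
        exact_mod_cast this
      · intro j hj
        exact support_cond_of_X_mul_pderiv_eq_zero (by rw [hPj j hj, mul_zero]) hμ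
    rw [Algebra.adjoin_range_eq_range_aeval]
    exact mem_range_of_good hm hmn f hf a hgood
end

section
/- Let A be a unique factorization domain and let R be a subring of A such that the invertible elements of R coincide with the invertible elements of A (equivalently, every unit of A lies in R and is a unit of R, and every non-unit of R is a non-unit of A). If every irreducible element of R is irreducible in A, then every square-free element of R is square-free in A. -/
/-- Lemma 3, (i) ⇒ (ii): if `A` is a UFD and `R` is a subring of `A` whose
invertible elements are exactly the invertible elements of `A`, and every
irreducible element of `R` is irreducible in `A`, then every square-free
element of `R` is square-free in `A`. -/
theorem statement12 {A : Type*} [CommRing A] [IsDomain A] [UniqueFactorizationMonoid A]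
    (R : Subring A)
    (hu : ∀ a : A, IsUnit a ↔ ∃ u : R, IsUnit u ∧ (u : A) = a)
    (h : ∀ r : R, Irreducible r → Irreducible (r : A)) :
    ∀ r : R, Squarefree r → Squarefree (r : A) := by
  classical
  have hnu : ∀ x : R, ¬ IsUnit x → ¬ IsUnit (x : A) := by
    intro x hx hxa
    obtain ⟨u, hu1, hu2⟩ := (hu (x : A)).mp hxa
    exact hx (Subtype.coe_injective hu2 ▸ hu1)
  haveI : WfDvdMonoid R := by
    refine ⟨Subrelation.wf ?_ (InvImage.wf (fun r : R => (r : A))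
      (wellFounded_dvdNotUnit (α := A)))⟩
    rintro a b ⟨ha, x, hx, rfl⟩
    refine ⟨?_, x, hnu x hx, by push_cast; ring⟩
    show (a : A) ≠ 0
    exact_mod_cast ha
  intro r hr x hx
  by_contra hxu
  by_cases hr0 : r = 0
  · subst hr0
    have h1 : IsUnit (0 : R) := hr 0 (by simp)
    have h0 : IsUnit (0 : A) := (hu 0).mpr ⟨0, h1, rfl⟩
    have h10 : (1 : A) = 0 := by simpa using (isUnit_zero_iff.mp h0).symm
    haveI : Subsingleton A := subsingleton_of_zero_eq_one h10.symm
    exact hxu (by rw [Subsingleton.elim x 1]; exact isUnit_one)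
  obtain ⟨f, hf, hfr⟩ := WfDvdMonoid.exists_factors r hr0
  have hx0 : x ≠ 0 := by
    rintro rfl
    exact hr0 (Subtype.coe_injective (by simpa using (zero_dvd_iff.mp (by simpa using hx))))
  obtain ⟨q, hq, hqx⟩ := WfDvdMonoid.exists_irreducible_factor hxu hx0
  have hqp : Prime q := UniqueFactorizationMonoid.irreducible_iff_prime.mp hq
  have hqq : q * q ∣ (r : A) := (mul_dvd_mul hqx hqx).trans hx
  set cA : R → A := fun s : R => (s : A) with hcA
  have hcoe : ((f.prod : R) : A) = (f.map cA).prod := by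
    simp [(Multiset.prod_hom f (R.subtype)).symm]
    rfl
  have hfrA : Associated ((f.map cA).prod) (r : A) := by
    rw [← hcoe]
    obtain ⟨u, huu⟩ := hfr
    exact ⟨Units.map R.subtype.toMonoidHom u, by simp [← huu]⟩
  have hqqf : q * q ∣ (f.map cA).prod := hqq.trans hfrA.symm.dvd
  obtain ⟨a, haf, hqa⟩ := hqp.exists_mem_multiset_dvd ((dvd_mul_right q q).trans hqqf)
  obtain ⟨s, hsf, rfl⟩ := Multiset.mem_map.mp haf
  have hsA : Irreducible (cA s) := h s (hf s hsf)
  have hqs : Associated q (cA s) := hq.associated_of_dvd hsA hqa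
  have hsplit : (f.map cA).prod = cA s * ((f.erase s).map cA).prod := by
    conv_lhs => rw [← Multiset.cons_erase hsf]
    simp
  obtain ⟨v, hv⟩ := id hqs
  have hq0 : q ≠ 0 := hqp.ne_zero
  have hqrest : q ∣ ((f.erase s).map cA).prod := by
    have h2 : q * q ∣ q * ((v : A) * ((f.erase s).map cA).prod) := by
      calc q * q ∣ cA s * ((f.erase s).map cA).prod := by rw [← hsplit]; exact hqqf
        _ = q * ((v : A) * ((f.erase s).map cA).prod) := by rw [← hv]; ring
    have h3 := (mul_dvd_mul_iff_left hq0).mp h2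
    exact (Units.dvd_mul_left).mp h3
  obtain ⟨b, hbf, hqb⟩ := hqp.exists_mem_multiset_dvd hqrest
  obtain ⟨t, htf, rfl⟩ := Multiset.mem_map.mp hbf
  have htA : Irreducible (cA t) := h t (hf t (Multiset.mem_of_mem_erase htf))
  have hqt : Associated q (cA t) := hq.associated_of_dvd htA hqb
  -- s and t are associated in A, hence t = s * w with w a unit of R
  have hst : Associated (cA s) (cA t) := hqs.symm.trans hqt
  obtain ⟨w, hw⟩ := hst
  have hw2 : (s : A) * (w : A) = (t : A) := hw
  obtain ⟨w', hw'1, hw'2⟩ := (hu (w : A)).mp w.isUnit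
  have htw : t = s * w' := by
    apply Subtype.coe_injective
    push_cast
    rw [hw'2, hw2]
  -- now s * s ∣ r in R, contradicting squarefreeness
  have hts : s * t ∣ f.prod := by
    have h1 : t ∣ (f.erase s).prod := Multiset.dvd_prod htf
    have h2 : f.prod = s * (f.erase s).prod := by
      conv_lhs => rw [← Multiset.cons_erase hsf]; rw [Multiset.prod_cons]
    rw [h2]
    exact mul_dvd_mul_left s h1
  have hss : s * s ∣ r := by
    have : s * s ∣ s * t := by
      rw [htw, ← mul_assoc]
      exact Dvd.intro w' rfl
    exact (this.trans hts).trans hfr.dvd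
  exact (hf s hsf).not_isUnit (hr s hss)
end

section
/- Let A be a unique factorization domain and let R be a subring of A such that the invertible elements of R coincide with the invertible elements of A (equivalently, every unit of A lies in R and is a unit of R, and every non-unit of R is a non-unit of A). Then every irreducible element of R is irreducible in A if and only if R is factorially closed in A. -/
/-- Lemma 4: if `A` is a UFD and `R` is a subring of `A` whose invertible
elements are exactly the invertible elements of `A`, then every irreducible
element of `R` is irreducible in `A` iff `R` is factorially closed in `A`
(i.e. `xy ∈ R ∖ {0}` implies `x, y ∈ R`). -/
theorem statement14 {A : Type*} [CommRing A] [IsDomain A] [UniqueFactorizationMonoid A]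
    (R : Subring A)
    (hu : ∀ a : A, IsUnit a ↔ ∃ u : R, IsUnit u ∧ (u : A) = a) :
    (∀ r : R, Irreducible r → Irreducible (r : A)) ↔
    (∀ x y : A, x * y ∈ R → x * y ≠ 0 → x ∈ R ∧ y ∈ R) := by
  classical
  letI : NormalizationMonoid A := (UniqueFactorizationMonoid.normalizationMonoid (α := A)).toNormalizationMonoid
  have unitA_mem : ∀ a : A, IsUnit a → a ∈ R := by
    intro a ha
    obtain ⟨u, -, hu2⟩ := (hu a).mp ha
    exact hu2 ▸ u.2
  have unitR_of_unitA : ∀ r : R, IsUnit (r : A) → IsUnit r := by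
    intro r hr
    obtain ⟨u, hu1, hu2⟩ := (hu r).mp hr
    rwa [show u = r from Subtype.ext hu2] at hu1
  have unitA_of_unitR : ∀ r : R, IsUnit r → IsUnit (r : A) := fun r hr => hr.map R.subtype
  constructor
  · intro hirr
    suffices h : ∀ n, ∀ x y : A,
        (UniqueFactorizationMonoid.normalizedFactors (x * y)).card = n →
        x * y ∈ R → x * y ≠ 0 → x ∈ R ∧ y ∈ R by
      intro x y hxy hne; exact h _ x y rfl hxy hne
    intro n
    induction n using Nat.strong_induction_on with
    | _ n ih =>
      intro x y hcard hmem hne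
      have hx0 : x ≠ 0 := left_ne_zero_of_mul hne
      have hy0 : y ≠ 0 := right_ne_zero_of_mul hne
      by_cases hunit : IsUnit (x * y)
      · exact ⟨unitA_mem x (isUnit_of_mul_isUnit_left hunit),
          unitA_mem y (isUnit_of_mul_isUnit_right hunit)⟩
      · set r : R := ⟨x * y, hmem⟩ with hr
        have hrnu : ¬ IsUnit r := fun h => hunit (unitA_of_unitR r h)
        by_cases hri : Irreducible r
        · have hIA : Irreducible (x * y) := hirr r hri
          rcases hIA.isUnit_or_isUnit rfl with hxu | hyu
          · refine ⟨unitA_mem x hxu, ?_⟩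
            have hinv : ((hxu.unit⁻¹ : Aˣ) : A) ∈ R :=
              unitA_mem _ (Units.isUnit _)
            have : y = ((hxu.unit⁻¹ : Aˣ) : A) * (x * y) := by
              rw [← mul_assoc]
              simp [Units.inv_mul_eq_iff_eq_mul]
            rw [this]
            exact R.mul_mem hinv hmem
          · refine ⟨?_, unitA_mem y hyu⟩
            have hinv : ((hyu.unit⁻¹ : Aˣ) : A) ∈ R :=
              unitA_mem _ (Units.isUnit _)
            have : x = ((hyu.unit⁻¹ : Aˣ) : A) * (x * y) := by
              rw [mul_comm x y, ← mul_assoc]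
              simp [Units.inv_mul_eq_iff_eq_mul]
            rw [this]
            exact R.mul_mem hinv hmem
        · -- r is reducible: r = s * t with s, t nonunits of R
          rw [irreducible_iff] at hri
          push_neg at hri
          obtain ⟨s, t, hst, hsnu, htnu⟩ := hri hrnu
          have hstA : (s : A) * (t : A) = x * y := by
            have := congrArg (Subtype.val) hst
            simpa using this.symm
          have hs0 : (s : A) ≠ 0 := fun h => hne (by rw [← hstA, h, zero_mul])
          have ht0 : (t : A) ≠ 0 := fun h => hne (by rw [← hstA, h, mul_zero])
          have hsnuA : ¬ IsUnit (s : A) := fun h => hsnu (unitR_of_unitA s h)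
          have htnuA : ¬ IsUnit (t : A) := fun h => htnu (unitR_of_unitA t h)
          -- split s along x * y
          obtain ⟨d₁, d₂, hd₁, hd₂, hsd⟩ :=
            exists_dvd_and_dvd_of_dvd_mul (Dvd.intro (t : A) hstA)
          obtain ⟨x₁, hx₁⟩ := hd₁
          obtain ⟨y₁, hy₁⟩ := hd₂
          have hd₁0 : d₁ ≠ 0 := fun h => hx0 (by rw [hx₁, h, zero_mul])
          have hd₂0 : d₂ ≠ 0 := fun h => hy0 (by rw [hy₁, h, zero_mul])
          have hcancel : x₁ * y₁ = (t : A) := by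
            have h1 : (s : A) * ((t : A)) = (s : A) * (x₁ * y₁) := by
              rw [hstA, hx₁, hy₁, hsd]; ring
            exact (mul_left_cancel₀ hs0 h1).symm
          -- cardinalities
          have hcards : (UniqueFactorizationMonoid.normalizedFactors (x * y)).card =
              (UniqueFactorizationMonoid.normalizedFactors (s : A)).card +
              (UniqueFactorizationMonoid.normalizedFactors (t : A)).card := by
            rw [← hstA, UniqueFactorizationMonoid.normalizedFactors_mul hs0 ht0,
              Multiset.card_add]
          have hpos : ∀ a : A, a ≠ 0 → ¬ IsUnit a →
              0 < (UniqueFactorizationMonoid.normalizedFactors a).card := by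
            intro a ha hau
            rw [Multiset.card_pos]
            intro h0
            apply hau
            have := UniqueFactorizationMonoid.prod_normalizedFactors ha
            rw [h0] at this
            simpa using this.symm
          have hcs : (UniqueFactorizationMonoid.normalizedFactors (s : A)).card < n := by
            rw [← hcard, hcards]
            have := hpos (t : A) ht0 htnuA
            omega
          have hct : (UniqueFactorizationMonoid.normalizedFactors (t : A)).card < n := by
            rw [← hcard, hcards]
            have := hpos (s : A) hs0 hsnuA
            omega
          have hdR : d₁ ∈ R ∧ d₂ ∈ R := by
            refine ih _ hcs d₁ d₂ ?_ ?_ ?_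
            · rw [← hsd]
            · rw [← hsd]; exact s.2
            · rw [← hsd]; exact hs0
          have hxyR : x₁ ∈ R ∧ y₁ ∈ R := by
            refine ih _ hct x₁ y₁ ?_ ?_ ?_
            · rw [hcancel]
            · rw [hcancel]; exact t.2
            · rw [hcancel]; exact ht0
          exact ⟨hx₁ ▸ R.mul_mem hdR.1 hxyR.1, hy₁ ▸ R.mul_mem hdR.2 hxyR.2⟩
  · intro hfc r hri
    refine ⟨fun h => hri.not_isUnit (unitR_of_unitA r h), ?_⟩
    intro a b hab
    have hr0 : (r : A) ≠ 0 := by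
      intro h
      exact hri.ne_zero (Subtype.ext h)
    have hmem : a * b ∈ R := hab ▸ r.2
    have hne : a * b ≠ 0 := hab ▸ hr0
    obtain ⟨haR, hbR⟩ := hfc a b hmem hne
    have : r = (⟨a, haR⟩ : R) * ⟨b, hbR⟩ := Subtype.ext (by simpa using hab)
    rcases hri.isUnit_or_isUnit this with h | h
    · exact Or.inl (unitA_of_unitR _ h)
    · exact Or.inr (unitA_of_unitR _ h)
end

section
/- Let A be a unique factorization domain and let R be a subring of A such that the invertible elements of R coincide with the invertible elements of A (equivalently, every unit of A lies in R and is a unit of R, and every non-unit of R is a non-unit of A) and such that R_0 ∩ A = R. Then the following conditions are equivalent: (i) every square-free element of R is square-free in A; (ii) R is square-factorially closed in A, i.e., for every x ∈ A and every y ∈ A square-free in A, if x²y ∈ R∖{0}, then x ∈ R and y ∈ R. -/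
open UniqueFactorizationMonoid

section Aux

variable {A : Type*} [CommRing A] [IsDomain A] [UniqueFactorizationMonoid A]
  [NormalizationMonoid A]

lemma aux_card_pos {b : A} (hb : b ≠ 0) (hb' : ¬ IsUnit b) :
    0 < (normalizedFactors b).card := by
  have h := (normalizedFactors_pos b hb).mpr hb'
  exact Multiset.card_pos.mpr (fun he => by rw [he] at h; exact lt_irrefl _ h)

/-- Every nonzero element of a UFD is a square times a squarefree element. -/
lemma aux_sq_mul_squarefree :
    ∀ (n : ℕ) (a : A), a ≠ 0 → (normalizedFactors a).card ≤ n →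
      ∃ x y : A, x ^ 2 * y = a ∧ Squarefree y := by
  intro n
  induction n with
  | zero =>
    intro a ha hcard
    refine ⟨1, a, by ring, ?_⟩
    have hu : IsUnit a := by
      by_contra hu
      have := aux_card_pos ha hu
      omega
    exact hu.squarefree
  | succ n ih =>
    intro a ha hcard
    by_cases hsq : Squarefree a
    · exact ⟨1, a, by ring, hsq⟩
    · rw [Squarefree] at hsq
      push_neg at hsq
      obtain ⟨z, hz, hzu⟩ := hsq
      obtain ⟨a', rfl⟩ := hz
      have hz0 : z ≠ 0 := fun h => ha (by simp [h])
      have ha' : a' ≠ 0 := by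
        intro h; exact ha (by simp [h])
      have hcard' : (normalizedFactors a').card ≤ n := by
        have h1 := aux_card_pos hz0 hzu
        rw [normalizedFactors_mul (mul_ne_zero hz0 hz0) ha',
          normalizedFactors_mul hz0 hz0, Multiset.card_add, Multiset.card_add] at hcard
        omega
      obtain ⟨x, y, hxy, hy⟩ := ih a' ha' hcard'
      exact ⟨z * x, y, by rw [← hxy]; ring, hy⟩

lemma aux_assoc_unit {x y b c : A} (h : x ^ 2 * y = b ^ 2 * c) (hy : Squarefree y)
    (hxu : IsUnit x) : Associated x b := by
  have hu2 : ((hxu.unit⁻¹ : Aˣ) : A) ^ 2 * x ^ 2 = 1 := by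
    rw [← mul_pow]
    norm_num [show ((hxu.unit⁻¹ : Aˣ) : A) * x = 1 by
      simpa using Units.inv_mul hxu.unit]
  have hb : IsUnit b := by
    refine hy b ⟨((hxu.unit⁻¹ : Aˣ) : A) ^ 2 * c, ?_⟩
    calc y = (((hxu.unit⁻¹ : Aˣ) : A) ^ 2 * x ^ 2) * y := by rw [hu2, one_mul]
      _ = ((hxu.unit⁻¹ : Aˣ) : A) ^ 2 * (x ^ 2 * y) := by ring
      _ = ((hxu.unit⁻¹ : Aˣ) : A) ^ 2 * (b ^ 2 * c) := by rw [h]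
      _ = b * b * (((hxu.unit⁻¹ : Aˣ) : A) ^ 2 * c) := by ring
  exact (associated_one_iff_isUnit.mpr hxu).symm.symm.trans
    ((associated_one_iff_isUnit.mpr hb).symm) |>.symm.symm
  |>.trans (Associated.refl b)

/-- Uniqueness (up to associates) of the squarefree decomposition in a UFD. -/
lemma aux_assoc :
    ∀ (n : ℕ) (x y b c : A), x ^ 2 * y = b ^ 2 * c → Squarefree y → Squarefree c →
      x ^ 2 * y ≠ 0 → (normalizedFactors x).card ≤ n → Associated x b := by
  intro n
  induction n with
  | zero =>
    intro x y b c h hy hc h0 hcard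
    have hx0 : x ≠ 0 := fun h' => h0 (by simp [h'])
    have hxu : IsUnit x := by
      by_contra hu
      have := aux_card_pos hx0 hu
      omega
    exact aux_assoc_unit h hy hxu
  | succ n ih =>
    intro x y b c h hy hc h0 hcard
    have hx0 : x ≠ 0 := fun h' => h0 (by simp [h'])
    by_cases hxu : IsUnit x
    · exact aux_assoc_unit h hy hxu
    -- extract a prime factor p of x
    obtain ⟨p, hpirr, hpx⟩ := WfDvdMonoid.exists_irreducible_factor hxu hx0
    have hp : Prime p := (UniqueFactorizationMonoid.irreducible_iff_prime).mp hpirr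
    have hp0 : p ≠ 0 := hp.ne_zero
    obtain ⟨x', rfl⟩ := hpx
    -- p divides b
    have hpsq : p ^ 2 ∣ b ^ 2 * c := ⟨x' ^ 2 * y, by rw [← h]; ring⟩
    have hpb : p ∣ b := by
      by_contra hpb
      have hpb2 : ¬ p ∣ b ^ 2 := fun hd => hpb (hp.dvd_of_dvd_pow hd)
      have hpc : p ∣ c :=
        ((hp.dvd_mul).mp (dvd_trans (dvd_pow_self p two_ne_zero) hpsq)).resolve_left hpb2
      obtain ⟨c', rfl⟩ := hpc
      have hpc' : p ∣ c' := by
        have h2 : p * p ∣ p * (b ^ 2 * c') := by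
          obtain ⟨w, hw⟩ := hpsq
          refine ⟨w, ?_⟩
          have : p * (p * w) = p * (b ^ 2 * c') := by
            rw [show p * (p * w) = p ^ 2 * w by ring, ← hw]; ring
          rw [show p * p * w = p * (p * w) by ring, this]
        have := (mul_dvd_mul_iff_left hp0).mp h2
        exact ((hp.dvd_mul).mp this).resolve_left hpb2
      obtain ⟨c'', rfl⟩ := hpc'
      exact hp.not_unit (hc p ⟨c'', by ring⟩)
    obtain ⟨b', rfl⟩ := hpb
    -- cancel p ^ 2
    have hcancel : x' ^ 2 * y = b' ^ 2 * c := by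
      have h2 : p ^ 2 * (x' ^ 2 * y) = p ^ 2 * (b' ^ 2 * c) := by
        rw [show p ^ 2 * (x' ^ 2 * y) = (p * x') ^ 2 * y by ring, h]; ring
      exact mul_left_cancel₀ (pow_ne_zero 2 hp0) h2
    have hx'0 : x' ≠ 0 := fun h' => hx0 (by simp [h'])
    have h0' : x' ^ 2 * y ≠ 0 := by
      intro h'
      apply h0
      rw [show (p * x') ^ 2 * y = p ^ 2 * (x' ^ 2 * y) by ring, h', mul_zero]
    have hcard' : (normalizedFactors x').card ≤ n := by
      rw [normalizedFactors_mul hp0 hx'0, Multiset.card_add,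
        normalizedFactors_irreducible hpirr] at hcard
      simp only [Multiset.card_singleton] at hcard; omega
    exact (ih x' y b' c hcancel hy hc h0' hcard').mul_left p

end Aux
/-- Theorem 3: let `A` be a UFD and `R` a subring of `A` whose invertible
elements are exactly the invertible elements of `A` and with `R₀ ∩ A = R`.
Then every square-free element of `R` is square-free in `A` iff `R` is
square-factorially closed in `A`: for every `x ∈ A` and square-free `y ∈ A`,
`x²y ∈ R ∖ {0}` implies `x, y ∈ R`. -/
theorem statement16 {A : Type*} [CommRing A] [IsDomain A] [UniqueFactorizationMonoid A]
    (R : Subring A)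
    (hu : ∀ a : A, IsUnit a ↔ ∃ u : R, IsUnit u ∧ (u : A) = a)
    (hfr : ∀ a : A, (∃ r s : R, (s : A) ≠ 0 ∧ a * (s : A) = (r : A)) → a ∈ R) :
    (∀ r : R, Squarefree r → Squarefree (r : A)) ↔
    (∀ x y : A, Squarefree y → x ^ 2 * y ∈ R → x ^ 2 * y ≠ 0 → x ∈ R ∧ y ∈ R) := by
  letI : NormalizationMonoid A :=
    @StrongNormalizationMonoid.toNormalizationMonoid A _ UniqueFactorizationMonoid.normalizationMonoid
  classical
  constructor
  · -- (i) → (ii)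
    intro hi x y hy hmem hne
    set r : R := ⟨x ^ 2 * y, hmem⟩ with hr_def
    have hrne : (r : A) ≠ 0 := hne
    -- predicate: n is realized as the factor-count of some b with b² c = x² y, b c ∈ R
    set P : ℕ → Prop := fun n => ∃ b c : R,
      ((b : A)) ^ 2 * (c : A) = x ^ 2 * y ∧ (normalizedFactors (b : A)).card = n with hP_def
    set k := (normalizedFactors (x ^ 2 * y)).card with hk
    have hbound : ∀ n, P n → n ≤ k := by
      rintro n ⟨b, c, hbc, hcard⟩
      have hb0 : (b : A) ≠ 0 := by
        intro h0
        apply hne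
        rw [← hbc, h0]; ring
      have hc0 : (c : A) ≠ 0 := by
        intro h0
        apply hne
        rw [← hbc, h0]; ring
      rw [← hcard, hk, ← hbc, show ((b:A))^2 * c = (b:A) * ((b:A) * c) by ring,
        normalizedFactors_mul hb0 (mul_ne_zero hb0 hc0), Multiset.card_add]
      omega
    have hP0 : P 0 := ⟨1, r, by simp [hr_def], by simp⟩
    -- maximal realized n
    set n₀ := Nat.findGreatest P k with hn₀
    have hPn₀ : P n₀ := Nat.findGreatest_spec (Nat.zero_le k) hP0
    obtain ⟨b, c, hbc, hcard⟩ := hPn₀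
    have hc0 : (c : A) ≠ 0 := by
      intro h0; apply hne; rw [← hbc, h0]; ring
    -- c is squarefree in R
    have hcsf : Squarefree c := by
      intro z hz
      by_contra hzu
      obtain ⟨f, hf⟩ := hz
      have hz0 : (z : A) ≠ 0 := by
        intro h0
        apply hc0
        rw [hf]
        push_cast [h0]
        ring
      have hzuA : ¬ IsUnit (z : A) := by
        intro hzA
        obtain ⟨u, huu, hue⟩ := (hu (z : A)).mp hzA
        exact hzu (by rwa [show u = z from Subtype.ext hue] at huu)
      have hnew : P ((normalizedFactors (b : A)).card + (normalizedFactors (z : A)).card) := by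
        refine ⟨b * z, f, ?_, ?_⟩
        · push_cast
          rw [← hbc, show ((c : R) : A) = ((z * z * f : R) : A) from congrArg _ hf]
          push_cast
          ring
        · have hb0 : (b : A) ≠ 0 := by
            intro h0; apply hne; rw [← hbc, h0]; ring
          push_cast
          rw [normalizedFactors_mul hb0 hz0, Multiset.card_add]
      have hgt : n₀ < (normalizedFactors (b : A)).card + (normalizedFactors (z : A)).card := by
        have := aux_card_pos hz0 hzuA
        omega
      exact Nat.findGreatest_is_greatest hgt (hbound _ hnew) hnew
    have hcA : Squarefree (c : A) := hi c hcsf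
    -- x and b are associated
    have hassoc : Associated x (b : A) :=
      aux_assoc (normalizedFactors x).card x y (b : A) (c : A) hbc.symm hy hcA hne le_rfl
    obtain ⟨u, hxu⟩ := hassoc
    -- x ∈ R
    have hxR : x ∈ R := by
      obtain ⟨w, hwu, hwe⟩ := (hu ((u⁻¹ : Aˣ) : A)).mp (Units.isUnit _)
      have : x = (b : A) * ((u⁻¹ : Aˣ) : A) := by
        rw [← hxu, mul_assoc]
        simp
      rw [this, ← hwe]
      exact R.mul_mem b.2 w.2
    refine ⟨hxR, ?_⟩
    -- y ∈ R
    obtain ⟨v, hvu, hve⟩ := (hu ((u : Aˣ) : A)).mp (Units.isUnit _)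
    have hx0 : x ≠ 0 := by
      intro h0; apply hne; rw [h0]; ring
    have hyeq : y = ((u : Aˣ) : A) ^ 2 * (c : A) := by
      have h2 : x ^ 2 * y = x ^ 2 * (((u : Aˣ) : A) ^ 2 * (c : A)) := by
        rw [← hbc, ← hxu]; ring
      exact mul_left_cancel₀ (pow_ne_zero 2 hx0) h2
    rw [hyeq, ← hve]
    exact R.mul_mem (R.pow_mem v.2 2) c.2
  · -- (ii) → (i)
    intro hii r hr
    have hr0 : (r : A) ≠ 0 := by
      intro h0
      have : r = 0 := Subtype.ext h0
      subst this
      have : IsUnit (0 : R) := hr 0 (dvd_zero _)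
      have : IsUnit (0 : A) := this.map R.subtype
      simp at this
    intro z hz
    obtain ⟨w, hw⟩ := hz
    have hw0 : w ≠ 0 := by
      intro h0; apply hr0; rw [hw, h0, mul_zero]
    obtain ⟨s, t, hst, ht⟩ :=
      aux_sq_mul_squarefree (normalizedFactors w).card w hw0 le_rfl
    have heq : (z * s) ^ 2 * t = (r : A) := by
      rw [hw, ← hst]; ring
    have hmem : (z * s) ^ 2 * t ∈ R := by rw [heq]; exact r.2
    have hne : (z * s) ^ 2 * t ≠ 0 := by rw [heq]; exact hr0
    obtain ⟨hzsR, htR⟩ := hii (z * s) t ht hmem hne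
    have hdvd : (⟨z * s, hzsR⟩ : R) * ⟨z * s, hzsR⟩ ∣ r := by
      refine ⟨⟨t, htR⟩, ?_⟩
      apply Subtype.ext
      push_cast
      rw [← heq]; ring
    have : IsUnit ((⟨z * s, hzsR⟩ : R)) := hr _ hdvd
    have hzs : IsUnit (z * s) := this.map R.subtype
    exact isUnit_of_mul_isUnit_left hzs
end

section
/- Let A be a unique factorization domain and let R be a subring of A such that the invertible elements of R coincide with the invertible elements of A (equivalently, every unit of A lies in R and is a unit of R, and every non-unit of R is a non-unit of A) and such that R_0 ∩ A = R. If R is square-factorially closed in A, then R is root closed in A, i.e., for every x ∈ A and every integer n ≥ 1, x^n ∈ R implies x ∈ R. -/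
open UniqueFactorizationMonoid

private lemma exists_sq_mul_sqfree {A : Type*} [CommRing A] [IsDomain A]
    [UniqueFactorizationMonoid A] (x : A) (hx : x ≠ 0) :
    ∃ a b : A, x = a ^ 2 * b ∧ Squarefree b ∧ a ≠ 0 ∧ b ≠ 0 := by
  letI : StrongNormalizationMonoid A := UniqueFactorizationMonoid.normalizationMonoid
  suffices H : ∀ k : ℕ, ∀ x : A, x ≠ 0 → (normalizedFactors x).card ≤ k →
      ∃ a b : A, x = a ^ 2 * b ∧ Squarefree b ∧ a ≠ 0 ∧ b ≠ 0 from
    H (normalizedFactors x).card x hx le_rfl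
  intro k
  induction k using Nat.strong_induction_on with
  | _ k ih =>
  intro x hx hxk
  by_cases hsf : Squarefree x
  · exact ⟨1, x, by ring, hsf, one_ne_zero, hx⟩
  · have : ∃ c, c * c ∣ x ∧ ¬IsUnit c := by
      by_contra h
      push_neg at h
      exact hsf fun c hc => h c hc
    obtain ⟨c, hc, hcu⟩ := this
    obtain ⟨d, hd⟩ := hc
    have hc0 : c ≠ 0 := by rintro rfl; simp [hd] at hx
    have hd0 : d ≠ 0 := by rintro rfl; simp [hd] at hx
    have hcard : (normalizedFactors d).card < k := by
      have := hxk
      rw [hd, normalizedFactors_mul (mul_ne_zero hc0 hc0) hd0,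
        normalizedFactors_mul hc0 hc0, Multiset.card_add, Multiset.card_add] at this
      have hpos : 0 < (normalizedFactors c).card :=
        Multiset.card_pos.mpr (pos_iff_ne_zero.mp ((normalizedFactors_pos c hc0).mpr hcu))
      omega
    obtain ⟨a, b, hab, hbsf, ha0, hb0⟩ := ih _ hcard d hd0 le_rfl
    exact ⟨c * a, b, by rw [hd, hab]; ring, hbsf, mul_ne_zero hc0 ha0, hb0⟩

/-- Theorem 4: let `A` be a UFD and `R` a subring of `A` whose invertible
elements are exactly the invertible elements of `A` and with `R₀ ∩ A = R`.
If `R` is square-factorially closed in `A` (for every `x ∈ A` and square-free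
`y ∈ A`, `x²y ∈ R ∖ {0}` implies `x, y ∈ R`), then `R` is root closed in `A`
(for every `x ∈ A` and `n ≥ 1`, `xⁿ ∈ R` implies `x ∈ R`). -/
theorem statement17 {A : Type*} [CommRing A] [IsDomain A] [UniqueFactorizationMonoid A]
    (R : Subring A)
    (hu : ∀ a : A, IsUnit a ↔ ∃ u : R, IsUnit u ∧ (u : A) = a)
    (hfr : ∀ a : A, (∃ r s : R, (s : A) ≠ 0 ∧ a * (s : A) = (r : A)) → a ∈ R)
    (hsfc : ∀ x y : A, Squarefree y → x ^ 2 * y ∈ R → x ^ 2 * y ≠ 0 → x ∈ R ∧ y ∈ R) :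
    ∀ (x : A) (n : ℕ), 1 ≤ n → x ^ n ∈ R → x ∈ R := by
  letI : StrongNormalizationMonoid A := UniqueFactorizationMonoid.normalizationMonoid
  have hunit : ∀ a : A, IsUnit a → a ∈ R := by
    intro a ha
    obtain ⟨u, -, hu2⟩ := (hu a).mp ha
    exact hu2 ▸ u.2
  suffices H : ∀ k : ℕ, ∀ x : A, (normalizedFactors x).card ≤ k →
      ∀ n : ℕ, 1 ≤ n → x ^ n ∈ R → x ∈ R by
    intro x n hn hxn
    exact H (normalizedFactors x).card x le_rfl n hn hxn
  intro k
  induction k using Nat.strong_induction_on with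
  | _ k ihk =>
  intro x hxk n
  induction n using Nat.strong_induction_on with
  | _ n ihn =>
  intro hn hxn
  by_cases hx0 : x = 0
  · exact hx0 ▸ R.zero_mem
  rcases Nat.even_or_odd n with ⟨m, hm⟩ | ⟨q, hq⟩
  · -- n = m + m even: take square root
    have hm1 : 1 ≤ m := by omega
    have h1 : (x ^ m) ^ 2 * 1 ∈ R := by
      rw [mul_one, ← pow_mul]
      rwa [show m * 2 = n by omega]
    have h2 : (x ^ m) ^ 2 * 1 ≠ 0 := by
      simp [pow_ne_zero, hx0]
    have hxm : x ^ m ∈ R := (hsfc _ _ squarefree_one h1 h2).1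
    exact ihn m (by omega) hm1 hxm
  · -- n = 2q + 1 odd
    rcases Nat.eq_or_lt_of_le hn with h1 | h1
    · rw [← h1] at hxn; rwa [pow_one] at hxn
    -- n ≥ 2, so q ≥ 1
    obtain ⟨a, b, hab, hbsf, ha0, hb0⟩ := exists_sq_mul_sqfree x hx0
    have key : x ^ n = (a ^ n * b ^ q) ^ 2 * b := by
      rw [hab, hq]; ring
    have hne : (a ^ n * b ^ q) ^ 2 * b ≠ 0 := by
      rw [← key]; exact pow_ne_zero _ hx0
    obtain ⟨ht, hbR⟩ := hsfc _ _ hbsf (key ▸ hxn) hne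
    -- from a^n * b^q ∈ R and b^q ∈ R \ {0}, get a^n ∈ R
    have hq1 : 1 ≤ q := by omega
    have hbq : b ^ q ∈ R := pow_mem hbR q
    have haR : a ^ n ∈ R :=
      hfr _ ⟨⟨_, ht⟩, ⟨_, hbq⟩, pow_ne_zero _ hb0, rfl⟩
    by_cases hau : IsUnit a
    · have : a ∈ R := hunit a hau
      rw [hab]; exact R.mul_mem (pow_mem this 2) hbR
    · -- a has strictly fewer prime factors than x
      have hcard : (normalizedFactors a).card < k := by
        have hx' := hxk
        rw [hab, normalizedFactors_mul (pow_ne_zero _ ha0) hb0, pow_two,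
          normalizedFactors_mul ha0 ha0, Multiset.card_add, Multiset.card_add] at hx'
        have hpos : 0 < (normalizedFactors a).card :=
          Multiset.card_pos.mpr (pos_iff_ne_zero.mp ((normalizedFactors_pos a ha0).mpr hau))
        omega
      have haRmem : a ∈ R := ihk _ hcard a le_rfl n hn haR
      rw [hab]; exact R.mul_mem (pow_mem haRmem 2) hbR
end
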